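/- arXiv:1706.09752 — 6 statements merged into one kernel-verified Lean document; each statement's English description precedes it below -/
import Mathlib

section
/- For all H₁, H₂ ∈ [0, log 2], the function g(H₁,H₂) := h₂(h₂⁻¹(H₁) ∗ h₂⁻¹(H₂)) satisfies g(H₁,H₂) ≤ log 2 − (log 2 − H₁)(log 2 − H₂)/log 2. -/
noncomputable def binConv (a b : ℝ) : ℝ := a * (1 - b) + (1 - a) * b

noncomputable def h2 (p : ℝ) : ℝ := -p * Real.log p - (1 - p) * Real.log (1 - p)

namespace MGL

open Real Filter Finset

/-- The coefficients of the power series `log 2 - h2 ((1-x)/2) = ∑ c k * x^(2k+2)`. -/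
noncomputable def c (k : ℕ) : ℝ := 1 / ((2 * (k : ℝ) + 1) * (2 * (k : ℝ) + 2))

lemma c_nonneg (k : ℕ) : 0 ≤ c k := by
  unfold c
  positivity

lemma summable_c : Summable c := by
  have h : Summable (fun k : ℕ => 1 / ((k : ℝ) + 1) ^ 2) := by
    have := (summable_nat_add_iff (f := fun n : ℕ => 1 / (n : ℝ) ^ 2) 1).2
      (Real.summable_one_div_nat_pow.2 one_lt_two)
    simpa using this
  refine Summable.of_nonneg_of_le c_nonneg (fun k => ?_) h
  unfold c
  rw [div_le_div_iff₀ (by positivity) (by positivity)]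
  have hk : (0:ℝ) ≤ (k:ℝ) := Nat.cast_nonneg k
  nlinarith [hk]

lemma h2_nonneg {p : ℝ} (h0 : 0 ≤ p) (h1 : p ≤ 1) : 0 ≤ h2 p := by
  have l1 : Real.log p ≤ 0 := Real.log_nonpos h0 h1
  have l2 : Real.log (1 - p) ≤ 0 := Real.log_nonpos (by linarith) (by linarith)
  have m1 : 0 ≤ p * (-Real.log p) := mul_nonneg h0 (by linarith)
  have m2 : 0 ≤ (1 - p) * (-Real.log (1 - p)) := mul_nonneg (by linarith) (by linarith)
  unfold h2
  nlinarith

/-- Power series identity: for `0 ≤ x < 1`,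
`∑ c k * x^(2k+2) = log 2 - h2 ((1-x)/2)`. -/
lemma hasSum_aux {x : ℝ} (h0 : 0 ≤ x) (h1 : x < 1) :
    HasSum (fun k : ℕ => c k * x ^ (2 * k + 2)) (Real.log 2 - h2 ((1 - x) / 2)) := by
  have habs : |x| < 1 := abs_lt.2 ⟨by linarith, h1⟩
  have hx2 : |x ^ 2| < 1 := by
    rw [abs_pow]
    calc |x| ^ 2 ≤ |x| := by
          nlinarith [abs_nonneg x]
      _ < 1 := habs
  have hA := (hasSum_log_sub_log_of_abs_lt_one habs).mul_left (x / 2)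
  have hB := (hasSum_pow_div_log_of_abs_lt_one hx2).mul_left ((1 : ℝ) / 2)
  have hC := hA.sub hB
  have hterm : ∀ k : ℕ,
      x / 2 * ((2 : ℝ) * (1 / (2 * (k : ℝ) + 1)) * x ^ (2 * k + 1)) -
        1 / 2 * ((x ^ 2) ^ (k + 1) / ((k : ℝ) + 1)) = c k * x ^ (2 * k + 2) := by
    intro k
    have hpow : (x ^ 2) ^ (k + 1) = x ^ (2 * k + 2) := by
      rw [← pow_mul]
      ring_nf
    rw [hpow]
    have e1 : x / 2 * ((2 : ℝ) * (1 / (2 * (k : ℝ) + 1)) * x ^ (2 * k + 1)) =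
        x ^ (2 * k + 2) * (1 / (2 * (k : ℝ) + 1)) := by
      rw [pow_succ]
      ring
    rw [e1]
    have d1 : (0 : ℝ) < 2 * (k : ℝ) + 1 := by positivity
    have d2 : (0 : ℝ) < (k : ℝ) + 1 := by positivity
    unfold c
    field_simp
    ring
  have hval : x / 2 * (Real.log (1 + x) - Real.log (1 - x)) -
      1 / 2 * (-Real.log (1 - x ^ 2)) = Real.log 2 - h2 ((1 - x) / 2) := by
    have p1 : (0 : ℝ) < 1 - x := by linarith
    have p2 : (0 : ℝ) < 1 + x := by linarith
    have e2 : (1 : ℝ) - x ^ 2 = (1 - x) * (1 + x) := by ring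
    rw [e2, Real.log_mul (ne_of_gt p1) (ne_of_gt p2)]
    have e3 : h2 ((1 - x) / 2) =
        -((1 - x) / 2) * Real.log ((1 - x) / 2) -
          ((1 + x) / 2) * Real.log ((1 + x) / 2) := by
      unfold h2
      ring_nf
    rw [e3, Real.log_div (ne_of_gt p1) (by norm_num), Real.log_div (ne_of_gt p2) (by norm_num)]
    ring
  have := hC
  rw [show (fun k : ℕ =>
      x / 2 * ((2 : ℝ) * (1 / (2 * (k : ℝ) + 1)) * x ^ (2 * k + 1)) -
        1 / 2 * ((x ^ 2) ^ (k + 1) / ((k : ℝ) + 1))) =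
      (fun k : ℕ => c k * x ^ (2 * k + 2)) from funext hterm, hval] at this
  exact this

/-- Partial sums of `c` are at most `log 2`. -/
lemma sum_c_le (n : ℕ) : ∑ k ∈ Finset.range n, c k ≤ Real.log 2 := by
  -- take the limit as t → 1⁻ of `∑_{k<n} c k * t^(2k+2) ≤ log 2 - h2 (...) ≤ log 2`
  obtain ⟨t, ht0, ht1, htend⟩ : ∃ t : ℕ → ℝ,
      (∀ j, 0 ≤ t j) ∧ (∀ j, t j < 1) ∧ Tendsto t atTop (nhds 1) := by
    refine ⟨fun j => 1 - 1 / ((j : ℝ) + 1), fun j => ?_, fun j => ?_, ?_⟩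
    · have : 1 / ((j : ℝ) + 1) ≤ 1 := by
        rw [div_le_one (by positivity)]
        linarith [Nat.cast_nonneg (α := ℝ) j]
      linarith
    · have : 0 < 1 / ((j : ℝ) + 1) := by positivity
      linarith
    · have h := tendsto_one_div_add_atTop_nhds_zero_nat (𝕜 := ℝ)
      have h' := h.const_sub (1 : ℝ)
      simpa using h'
  have hsum_tend : Tendsto (fun j => ∑ k ∈ Finset.range n, c k * (t j) ^ (2 * k + 2)) atTop
      (nhds (∑ k ∈ Finset.range n, c k * 1 ^ (2 * k + 2))) := by
    refine tendsto_finset_sum _ (fun k _ => ?_)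
    exact (htend.pow (2 * k + 2)).const_mul (c k)
  have hbound : ∀ j, ∑ k ∈ Finset.range n, c k * (t j) ^ (2 * k + 2) ≤ Real.log 2 := by
    intro j
    have hs := hasSum_aux (ht0 j) (ht1 j)
    have h1 : ∑ k ∈ Finset.range n, c k * (t j) ^ (2 * k + 2) ≤
        Real.log 2 - h2 ((1 - t j) / 2) := by
      refine sum_le_hasSum _ (fun k _ => ?_) hs
      exact mul_nonneg (c_nonneg k) (pow_nonneg (ht0 j) _)
    have htj1 : t j < 1 := ht1 j
    have htj0 : 0 ≤ t j := ht0 j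
    have h2n : 0 ≤ h2 ((1 - t j) / 2) :=
      h2_nonneg (by linarith) (by linarith)
    linarith
  have := le_of_tendsto' hsum_tend hbound
  simpa using this

lemma tsum_c_le : ∑' k, c k ≤ Real.log 2 :=
  Real.tsum_le_of_sum_range_le c_nonneg sum_c_le

/-- Finite Chebyshev sum inequality for our series. -/
lemma cheb {x y : ℝ} (hx0 : 0 ≤ x) (hx1 : x ≤ 1) (hy0 : 0 ≤ y) (hy1 : y ≤ 1) (n : ℕ) :
    (∑ k ∈ Finset.range n, c k * x ^ (2 * k + 2)) *
      (∑ k ∈ Finset.range n, c k * y ^ (2 * k + 2)) ≤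
    (∑ k ∈ Finset.range n, c k * (x * y) ^ (2 * k + 2)) *
      (∑ k ∈ Finset.range n, c k) := by
  induction n with
  | zero => simp
  | succ n ih =>
    rw [Finset.sum_range_succ, Finset.sum_range_succ, Finset.sum_range_succ,
      Finset.sum_range_succ]
    set A := ∑ k ∈ Finset.range n, c k * x ^ (2 * k + 2) with hA
    set B := ∑ k ∈ Finset.range n, c k * y ^ (2 * k + 2) with hB
    set C := ∑ k ∈ Finset.range n, c k * (x * y) ^ (2 * k + 2) with hC
    set D := ∑ k ∈ Finset.range n, c k with hD
    have key : B * x ^ (2 * n + 2) + A * y ^ (2 * n + 2) ≤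
        C + x ^ (2 * n + 2) * y ^ (2 * n + 2) * D := by
      rw [hA, hB, hC, hD, Finset.sum_mul, Finset.sum_mul, Finset.mul_sum,
        ← Finset.sum_add_distrib, ← Finset.sum_add_distrib]
      refine Finset.sum_le_sum (fun k hk => ?_)
      have hkn : 2 * k + 2 ≤ 2 * n + 2 := by
        have := Finset.mem_range.1 hk
        omega
      have hxp := pow_le_pow_of_le_one hx0 hx1 hkn
      have hyp := pow_le_pow_of_le_one hy0 hy1 hkn
      have hxk : 0 ≤ x ^ (2 * k + 2) := pow_nonneg hx0 _
      have hyk : 0 ≤ y ^ (2 * k + 2) := pow_nonneg hy0 _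
      have hxn : 0 ≤ x ^ (2 * n + 2) := pow_nonneg hx0 _
      have hyn : 0 ≤ y ^ (2 * n + 2) := pow_nonneg hy0 _
      have hrearr : x ^ (2 * n + 2) * y ^ (2 * k + 2) + x ^ (2 * k + 2) * y ^ (2 * n + 2) ≤
          x ^ (2 * k + 2) * y ^ (2 * k + 2) + x ^ (2 * n + 2) * y ^ (2 * n + 2) := by
        nlinarith [mul_nonneg (sub_nonneg.2 hxp) (sub_nonneg.2 hyp)]
      have hcnn := c_nonneg k
      have := mul_le_mul_of_nonneg_left hrearr hcnn
      rw [mul_pow]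
      nlinarith
    have hcn := c_nonneg n
    have hxyn : x ^ (2 * n + 2) * y ^ (2 * n + 2) = (x * y) ^ (2 * n + 2) := by
      rw [mul_pow]
    have hkey2 := mul_le_mul_of_nonneg_left key hcn
    rw [← hxyn]
    nlinarith [hkey2, ih]

/-- Chebyshev inequality for the infinite series. -/
lemma cheb_tsum {x y : ℝ} (hx0 : 0 ≤ x) (hx1 : x < 1) (hy0 : 0 ≤ y) (hy1 : y < 1) :
    (Real.log 2 - h2 ((1 - x) / 2)) * (Real.log 2 - h2 ((1 - y) / 2)) ≤
      (Real.log 2 - h2 ((1 - x * y) / 2)) * Real.log 2 := by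
  have hxy0 : 0 ≤ x * y := mul_nonneg hx0 hy0
  have hxy1 : x * y < 1 := by nlinarith
  have hsx := hasSum_aux hx0 hx1
  have hsy := hasSum_aux hy0 hy1
  have hsxy := hasSum_aux hxy0 hxy1
  have hFxy_nonneg : 0 ≤ Real.log 2 - h2 ((1 - x * y) / 2) :=
    hsxy.nonneg (fun k => mul_nonneg (c_nonneg k) (pow_nonneg hxy0 _))
  have hmain : (Real.log 2 - h2 ((1 - x) / 2)) * (Real.log 2 - h2 ((1 - y) / 2)) ≤
      (Real.log 2 - h2 ((1 - x * y) / 2)) * ∑' k, c k := by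
    refine le_of_tendsto_of_tendsto'
      (hsx.tendsto_sum_nat.mul hsy.tendsto_sum_nat)
      (hsxy.tendsto_sum_nat.mul summable_c.hasSum.tendsto_sum_nat)
      (fun n => cheb hx0 hx1.le hy0 hy1.le n)
  calc (Real.log 2 - h2 ((1 - x) / 2)) * (Real.log 2 - h2 ((1 - y) / 2)) ≤
      (Real.log 2 - h2 ((1 - x * y) / 2)) * ∑' k, c k := hmain
    _ ≤ (Real.log 2 - h2 ((1 - x * y) / 2)) * Real.log 2 :=
        mul_le_mul_of_nonneg_left tsum_c_le hFxy_nonneg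

lemma h2_zero : h2 0 = 0 := by
  simp [h2]

end MGL

/-- For all `H₁, H₂ ∈ [0, log 2]`,
`h₂(h₂⁻¹(H₁) ∗ h₂⁻¹(H₂)) ≤ log 2 − (log 2 − H₁)(log 2 − H₂)/log 2`. -/
theorem h2_binConv_upper_bound (h2inv : ℝ → ℝ)
    (hinv : ∀ x ∈ Set.Icc (0:ℝ) (Real.log 2),
      h2inv x ∈ Set.Icc (0:ℝ) (1/2) ∧ h2 (h2inv x) = x)
    (H₁ H₂ : ℝ) (hH₁ : H₁ ∈ Set.Icc (0:ℝ) (Real.log 2))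
    (hH₂ : H₂ ∈ Set.Icc (0:ℝ) (Real.log 2)) :
    h2 (binConv (h2inv H₁) (h2inv H₂)) ≤
      Real.log 2 - (Real.log 2 - H₁) * (Real.log 2 - H₂) / Real.log 2 := by
  obtain ⟨⟨ha0, ha2⟩, hh2a⟩ := hinv H₁ hH₁
  obtain ⟨⟨hb0, hb2⟩, hh2b⟩ := hinv H₂ hH₂
  set a := h2inv H₁ with hadef
  set b := h2inv H₂ with hbdef
  have hlog2 : (0 : ℝ) < Real.log 2 := Real.log_pos (by norm_num)
  rcases eq_or_lt_of_le ha0 with ha | ha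
  · -- a = 0, so H₁ = 0 and equality holds
    have hH1 : H₁ = 0 := by rw [← hh2a, ← ha, MGL.h2_zero]
    have hbc : binConv a b = b := by rw [← ha]; unfold binConv; ring
    have e : Real.log 2 * (Real.log 2 - H₂) / Real.log 2 = Real.log 2 - H₂ := by
      field_simp
    rw [hbc, hh2b, hH1, sub_zero, e]
    linarith
  · rcases eq_or_lt_of_le hb0 with hb | hb
    · -- b = 0, so H₂ = 0 and equality holds
      have hH2 : H₂ = 0 := by rw [← hh2b, ← hb, MGL.h2_zero]
      have hbc : binConv a b = a := by rw [← hb]; unfold binConv; ring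
      have e : (Real.log 2 - H₁) * Real.log 2 / Real.log 2 = Real.log 2 - H₁ := by
        field_simp
      rw [hbc, hh2a, hH2, sub_zero, e]
      linarith
    · -- main case: 0 < a, 0 < b
      set x := 1 - 2 * a with hxdef
      set y := 1 - 2 * b with hydef
      have hx0 : 0 ≤ x := by rw [hxdef]; linarith
      have hx1 : x < 1 := by rw [hxdef]; linarith
      have hy0 : 0 ≤ y := by rw [hydef]; linarith
      have hy1 : y < 1 := by rw [hydef]; linarith
      have hxa : (1 - x) / 2 = a := by rw [hxdef]; ring
      have hyb : (1 - y) / 2 = b := by rw [hydef]; ring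
      have hxyc : (1 - x * y) / 2 = binConv a b := by
        rw [hxdef, hydef]; unfold binConv; ring
      have key := MGL.cheb_tsum hx0 hx1 hy0 hy1
      rw [hxa, hyb, hxyc, hh2a, hh2b] at key
      have h1 : (Real.log 2 - H₁) * (Real.log 2 - H₂) / Real.log 2 ≤
          Real.log 2 - h2 (binConv a b) := by
        rw [div_le_iff₀ hlog2]
        exact key
      linarith
end

section
/- For each fixed H₂ ∈ [0, log 2], the function H₁ ↦ h₂(h₂⁻¹(H₁) ∗ h₂⁻¹(H₂)) is convex on [0, log 2]. -/
open Real Set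


lemma mgl_log_ineq {v : ℝ} (hv : 1 ≤ v) : 2 - 4 * (v + 1)⁻¹ ≤ Real.log v := by
  set g : ℝ → ℝ := fun v => Real.log v - (2 - 4 * (v + 1)⁻¹) with hg
  have hd : ∀ w ∈ Ioi (1:ℝ), HasDerivAt g (w⁻¹ - (0 - 4 * (-1 / (w+1)^2))) w := by
    intro w hw
    have hw1 : (1:ℝ) < w := hw
    have hne : w ≠ 0 := by positivity
    have hne1 : w + 1 ≠ 0 := by positivity
    have h1 : HasDerivAt (fun v : ℝ => (v + 1)⁻¹) (-1 / (w+1)^2) w := by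
      simpa using ((hasDerivAt_id w).add_const 1).fun_inv hne1
    exact (Real.hasDerivAt_log hne).sub ((hasDerivAt_const w 2).sub (h1.const_mul 4))
  have hmono : MonotoneOn g (Ici 1) := by
    apply monotoneOn_of_deriv_nonneg (convex_Ici 1)
    · apply ContinuousOn.sub
      · exact Real.continuousOn_log.mono (fun x hx => by
          simp only [mem_compl_iff, mem_singleton_iff]
          intro h; rw [h] at hx; exact absurd hx (by norm_num))
      · fun_prop (disch := intro x hx; intro h; nlinarith [mem_Ici.1 hx])
    · rw [interior_Ici]
      exact fun w hw => ((hd w hw).differentiableAt).differentiableWithinAt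
    · rw [interior_Ici]
      intro w hw
      rw [(hd w hw).deriv]
      have hw1 : (1:ℝ) < w := hw
      have key : w⁻¹ - (0 - 4 * (-1 / (w+1)^2)) = (w-1)^2 / (w * (w+1)^2) := by
        field_simp
        ring
      rw [key]; positivity
  have h1 : g 1 ≤ g v := hmono (mem_Ici.2 le_rfl) hv hv
  simp only [hg, Real.log_one] at h1
  norm_num at h1
  linarith




noncomputable def mglL (t : ℝ) : ℝ := Real.log (1 - t) - Real.log t

lemma mgl_hasDerivAt_L {t : ℝ} (h0 : t ≠ 0) (h1 : t ≠ 1) :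
    HasDerivAt mglL (-(1 - t)⁻¹ - t⁻¹) t := by
  have h1' : 1 - t ≠ 0 := sub_ne_zero.2 (Ne.symm h1)
  have ha : HasDerivAt (fun t : ℝ => 1 - t) (-1) t := by
    simpa using (hasDerivAt_id t).const_sub 1
  have hlog1 : HasDerivAt (fun t : ℝ => Real.log (1 - t)) ((1 - t)⁻¹ * (-1)) t :=
    (Real.hasDerivAt_log h1').comp t ha
  have := hlog1.fun_sub (Real.hasDerivAt_log h0)
  refine this.congr_deriv ?_
  ring

lemma mglL_pos {t : ℝ} (ht : t ∈ Ioo (0:ℝ) (1/2)) : 0 < mglL t :=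
  sub_pos.2 (Real.log_lt_log ht.1 (by linarith [ht.2]))

lemma mgl_L_lb {t : ℝ} (ht : t ∈ Ioo (0:ℝ) (1/2)) :
    1 - 2*t ≤ (1 - 2*t + 2*t^2) * mglL t := by
  obtain ⟨ht0, ht2⟩ := ht
  have h1t : 0 < 1 - t := by linarith
  have hv1 : 1 ≤ ((1-t)/t)^2 := by
    have : 1 ≤ (1-t)/t := (le_div_iff₀ ht0).2 (by linarith)
    nlinarith
  have hlogv : Real.log (((1-t)/t)^2) = 2 * mglL t := by
    rw [Real.log_pow, Real.log_div (by positivity) (by positivity)]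
    unfold mglL; push_cast; ring
  have hden : (0:ℝ) < 1 - 2*t + 2*t^2 := by nlinarith
  have hrw : 2 - 4 * ((((1-t)/t)^2) + 1)⁻¹ = 2*(1 - 2*t) / (1 - 2*t + 2*t^2) := by
    rw [eq_div_iff (by positivity)]
    have : (((1-t)/t)^2) + 1 = (1 - 2*t + 2*t^2)/t^2 := by field_simp; ring
    rw [this]
    field_simp
    ring
  have := mgl_log_ineq hv1
  rw [hrw, hlogv, div_le_iff₀ hden] at this
  linarith

noncomputable def mglPsi (t : ℝ) : ℝ := t * (1 - t) * mglL t / (1 - 2*t)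

lemma mglPsi_mono : MonotoneOn mglPsi (Ioo (0:ℝ) (1/2)) := by
  have hd : ∀ t ∈ Ioo (0:ℝ) (1/2), HasDerivAt mglPsi
      ((((1 - 2*t) * mglL t - 1) * (1 - 2*t) - (t * (1 - t) * mglL t) * (-2)) / (1 - 2*t)^2) t := by
    intro t ht
    obtain ⟨ht0, ht2⟩ := ht
    have h1t : (0:ℝ) < 1 - t := by linarith
    have h12 : (1:ℝ) - 2*t ≠ 0 := by intro h; linarith [sub_eq_zero.1 h]
    have hnum : HasDerivAt (fun t : ℝ => t * (1 - t) * mglL t) ((1 - 2*t) * mglL t - 1) t := by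
      have hq : HasDerivAt (fun t : ℝ => t * (1 - t)) (1 - 2*t) t := by
        have := (hasDerivAt_id t).fun_mul ((hasDerivAt_id t).const_sub 1)
        refine this.congr_deriv ?_; simp only [id]; ring
      have := hq.fun_mul (mgl_hasDerivAt_L (ne_of_gt ht0) (by linarith))
      refine this.congr_deriv ?_
      have ht0' : t ≠ 0 := ht0.ne'
      have h1t' : 1 - t ≠ 0 := h1t.ne'
      field_simp
      ring
    have hden : HasDerivAt (fun t : ℝ => 1 - 2*t) (-2) t := by
      simpa using ((hasDerivAt_id t).const_mul 2).const_sub 1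
    exact hnum.div hden h12
  apply monotoneOn_of_deriv_nonneg (convex_Ioo _ _)
  · intro t ht
    exact ((hd t ht).differentiableAt).continuousAt.continuousWithinAt
  · rw [interior_Ioo]
    exact fun t ht => ((hd t ht).differentiableAt).differentiableWithinAt
  · rw [interior_Ioo]
    intro t ht
    rw [(hd t ht).deriv]
    obtain ⟨ht0, ht2⟩ := ht
    have key : ((1 - 2*t) * mglL t - 1) * (1 - 2*t) - (t * (1 - t) * mglL t) * (-2)
        = (1 - 2*t + 2*t^2) * mglL t - (1 - 2*t) := by ring
    rw [key]
    have := mgl_L_lb ⟨ht0, ht2⟩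
    have h12 : (0:ℝ) < 1 - 2*t := by linarith
    have hnn : 0 ≤ (1 - 2*t + 2*t^2) * mglL t - (1 - 2*t) := by linarith
    positivity








lemma mgl_ratio_mono {a : ℝ} (ha0 : 0 ≤ a) (ha1 : a < 1/2) :
    MonotoneOn (fun p => mglL (a + (1 - 2*a) * p) / mglL p) (Ioo (0:ℝ) (1/2)) := by
  have hqmem : ∀ p ∈ Ioo (0:ℝ) (1/2), a + (1 - 2*a) * p ∈ Ioo (0:ℝ) (1/2) := by
    intro p hp
    constructor
    · nlinarith [hp.1]
    · nlinarith [hp.2]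
  have hple : ∀ p ∈ Ioo (0:ℝ) (1/2), p ≤ a + (1 - 2*a) * p := by
    intro p hp; nlinarith [hp.2]
  have hd : ∀ p ∈ Ioo (0:ℝ) (1/2),
      HasDerivAt (fun p => mglL (a + (1 - 2*a) * p) / mglL p)
        (((-(1 - (a + (1 - 2*a) * p))⁻¹ - (a + (1 - 2*a) * p)⁻¹) * (1 - 2*a) * mglL p
          - mglL (a + (1 - 2*a) * p) * (-(1 - p)⁻¹ - p⁻¹)) / (mglL p)^2) p := by
    intro p hp
    set q := a + (1 - 2*a) * p with hq
    have hqm := hqmem p hp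
    have hinner : HasDerivAt (fun p : ℝ => a + (1 - 2*a) * p) (1 - 2*a) p := by
      simpa using ((hasDerivAt_id p).const_mul (1 - 2*a)).const_add a
    have hLq : HasDerivAt (fun p : ℝ => mglL (a + (1 - 2*a) * p))
        ((-(1 - q)⁻¹ - q⁻¹) * (1 - 2*a)) p :=
      by have := (mgl_hasDerivAt_L (ne_of_gt hqm.1) (by intro h; rw [h] at hqm; linarith [hqm.2])).comp p hinner; exact this
    exact hLq.div (mgl_hasDerivAt_L (ne_of_gt hp.1) (by intro h; rw [h] at hp; linarith [hp.2]))
      (ne_of_gt (mglL_pos hp))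
  apply monotoneOn_of_deriv_nonneg (convex_Ioo _ _)
  · exact fun p hp => ((hd p hp).differentiableAt).continuousAt.continuousWithinAt
  · rw [interior_Ioo]
    exact fun p hp => ((hd p hp).differentiableAt).differentiableWithinAt
  · rw [interior_Ioo]
    intro p hp
    rw [(hd p hp).deriv]
    set q := a + (1 - 2*a) * p with hq
    have hqm := hqmem p hp
    obtain ⟨hp0, hp2⟩ := hp
    obtain ⟨hq0, hq2⟩ := hqm
    have h1p : (0:ℝ) < 1 - p := by linarith
    have h1q : (0:ℝ) < 1 - q := by linarith
    have h12p : (0:ℝ) < 1 - 2*p := by linarith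
    have h12q : (0:ℝ) < 1 - 2*q := by
      have : 1 - 2*q = (1 - 2*a)*(1 - 2*p) := by rw [hq]; ring
      rw [this]; exact mul_pos (by linarith) h12p
    have key : (1 - 2*a) * (p*(1-p)*mglL p) ≤ q*(1-q)*mglL q := by
      have hψ : mglPsi p ≤ mglPsi q :=
        mglPsi_mono ⟨hp0, hp2⟩ ⟨hq0, hq2⟩ (hple p ⟨hp0, hp2⟩)
      have ep : p*(1-p)*mglL p = mglPsi p * (1 - 2*p) := by
        unfold mglPsi; rw [div_mul_cancel₀ _ h12p.ne']
      have eq' : q*(1-q)*mglL q = mglPsi q * (1 - 2*q) := by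
        unfold mglPsi; rw [div_mul_cancel₀ _ h12q.ne']
      rw [ep, eq']
      have h2q : (1 - 2*a) * (1 - 2*p) = 1 - 2*q := by rw [hq]; ring
      calc (1 - 2*a) * (mglPsi p * (1 - 2*p)) = (1 - 2*q) * mglPsi p := by
            rw [← h2q]; ring
        _ ≤ (1 - 2*q) * mglPsi q := by
            exact mul_le_mul_of_nonneg_left hψ (le_of_lt h12q)
        _ = mglPsi q * (1 - 2*q) := by ring
    have e : (-(1 - q)⁻¹ - q⁻¹) * (1 - 2*a) * mglL p - mglL q * (-(1 - p)⁻¹ - p⁻¹)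
        = (q*(1-q)*mglL q - (1 - 2*a)*(p*(1-p)*mglL p)) / (p*(1-p)*(q*(1-q))) := by
      have hqne : q ≠ 0 := hq0.ne'
      field_simp
      ring
    rw [e]
    apply div_nonneg (div_nonneg (by linarith) (by positivity)) (by positivity)


lemma h2_eq_binEntropy : h2 = Real.binEntropy := by
  funext p
  simp only [h2, Real.binEntropy, Real.log_inv]
  ring

lemma h2_continuous : Continuous h2 := h2_eq_binEntropy ▸ Real.binEntropy_continuous

lemma hasDerivAt_h2 {p : ℝ} (h0 : p ≠ 0) (h1 : p ≠ 1) : HasDerivAt h2 (mglL p) p := by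
  rw [h2_eq_binEntropy]
  exact Real.hasDerivAt_binEntropy h0 h1

lemma h2_strictMonoOn : StrictMonoOn h2 (Icc 0 (1/2 : ℝ)) := by
  rw [h2_eq_binEntropy, show (1/2 : ℝ) = 2⁻¹ by norm_num]
  exact Real.binEntropy_strictMonoOn

lemma h2_zero : h2 0 = 0 := by simp [h2]

lemma h2_half : h2 (1/2 : ℝ) = Real.log 2 := by
  rw [h2_eq_binEntropy, show (1/2 : ℝ) = 2⁻¹ by norm_num]
  exact Real.binEntropy_two_inv

lemma h2_mem_Icc {p : ℝ} (hp : p ∈ Icc (0:ℝ) (1/2)) :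
    h2 p ∈ Icc (0:ℝ) (Real.log 2) := by
  rw [h2_eq_binEntropy]
  exact ⟨Real.binEntropy_nonneg hp.1 (by linarith [hp.2]), Real.binEntropy_le_log_two⟩

/-- For each fixed `H₂ ∈ [0, log 2]`, the function
`H₁ ↦ h₂(h₂⁻¹(H₁) ∗ h₂⁻¹(H₂))` is convex on `[0, log 2]`. -/
theorem h2_binConv_convex (h2inv : ℝ → ℝ)
    (hinv : ∀ x ∈ Set.Icc (0:ℝ) (Real.log 2),
      h2inv x ∈ Set.Icc (0:ℝ) (1/2) ∧ h2 (h2inv x) = x)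
    (H₂ : ℝ) (hH₂ : H₂ ∈ Set.Icc (0:ℝ) (Real.log 2)) :
    ConvexOn ℝ (Set.Icc (0:ℝ) (Real.log 2))
      (fun H₁ => h2 (binConv (h2inv H₁) (h2inv H₂))) := by
  have hlog2 : (0:ℝ) < Real.log 2 := Real.log_pos (by norm_num)
  obtain ⟨ham, hav⟩ := hinv H₂ hH₂
  set a := h2inv H₂ with ha_def
  rcases eq_or_lt_of_le ham.2 with hhalf | hlt
  · have hfun : (fun H₁ => h2 (binConv (h2inv H₁) a)) = fun _ => h2 (1/2) := by
      funext H
      congr 1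
      unfold binConv
      rw [hhalf]
      ring
    rw [hfun]
    exact convexOn_const _ (convex_Icc _ _)
  -- main case : a < 1/2
  have ha0 : 0 ≤ a := ham.1
  -- basic facts about h2inv
  have hinvmono : StrictMonoOn h2inv (Icc 0 (Real.log 2)) := by
    intro x hx y hy hxy
    rcases lt_trichotomy (h2inv x) (h2inv y) with h | h | h
    · exact h
    · exact absurd ((hinv x hx).2.symm.trans (h ▸ (hinv y hy).2)) (ne_of_lt hxy)
    · have := h2_strictMonoOn (hinv y hy).1 (hinv x hx).1 h
      rw [(hinv x hx).2, (hinv y hy).2] at this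
      linarith
  have hleft : ∀ p ∈ Icc (0:ℝ) (1/2), h2inv (h2 p) = p := by
    intro p hp
    have h1 := hinv (h2 p) (h2_mem_Icc hp)
    exact h2_strictMonoOn.injOn h1.1 hp h1.2
  have hIoo : ∀ x ∈ Ioo (0:ℝ) (Real.log 2), h2inv x ∈ Ioo (0:ℝ) (1/2) := by
    intro x hx
    obtain ⟨hm, hv⟩ := hinv x (Ioo_subset_Icc_self hx)
    constructor
    · rcases eq_or_lt_of_le hm.1 with h | h
      · exfalso; rw [← h, h2_zero] at hv; exact absurd hv.symm (ne_of_gt hx.1)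
      · exact h
    · rcases eq_or_lt_of_le hm.2 with h | h
      · exfalso; rw [h, h2_half] at hv; exact absurd hv (ne_of_gt hx.2)
      · exact h
  have hinv0 : h2inv 0 = 0 := by
    obtain ⟨hm, hv⟩ := hinv 0 ⟨le_rfl, le_of_lt hlog2⟩
    rcases eq_or_lt_of_le hm.1 with h | h
    · exact h.symm
    · exfalso
      have := Real.binEntropy_pos h (by linarith [hm.2])
      rw [← h2_eq_binEntropy] at this
      rw [hv] at this
      exact lt_irrefl 0 this
  have hinvtop : h2inv (Real.log 2) = 1/2 := by
    obtain ⟨hm, hv⟩ := hinv (Real.log 2) ⟨le_of_lt hlog2, le_rfl⟩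
    have := (Real.binEntropy_eq_log_two).1 (by rw [← h2_eq_binEntropy]; exact hv)
    rw [this]; norm_num
  -- continuity of h2inv
  have hcont : ContinuousOn h2inv (Icc 0 (Real.log 2)) := by
    intro x hx
    rcases eq_or_lt_of_le hx.1 with h0 | h0
    · rw [← h0]
      apply ContinuousWithinAt.mono _ Icc_subset_Ici_self
      apply hinvmono.continuousWithinAt_right_of_exists_between
        (Icc_mem_nhdsGE_of_mem ⟨le_rfl, hlog2⟩)
      intro b hb
      rw [hinv0] at hb
      refine ⟨h2 (min b (1/2)), h2_mem_Icc ⟨le_of_lt (lt_min hb (by norm_num)), min_le_right _ _⟩, ?_⟩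
      rw [hinv0, hleft _ ⟨le_of_lt (lt_min hb (by norm_num)), min_le_right _ _⟩]
      exact ⟨lt_min hb (by norm_num), min_le_left _ _⟩
    · rcases eq_or_lt_of_le hx.2 with h1 | h1
      · rw [h1]
        apply ContinuousWithinAt.mono _ Icc_subset_Iic_self
        apply hinvmono.continuousWithinAt_left_of_exists_between
          (Icc_mem_nhdsLE_of_mem ⟨hlog2, le_rfl⟩)
        intro b hb
        rw [hinvtop] at hb
        have hq : max b (1/4) ∈ Icc (0:ℝ) (1/2) :=
          ⟨le_trans (by norm_num) (le_max_right _ _), max_le (le_of_lt hb) (by norm_num)⟩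
        refine ⟨h2 (max b (1/4)), h2_mem_Icc hq, ?_⟩
        rw [hinvtop, hleft _ hq]
        exact ⟨le_max_left _ _, max_lt hb (by norm_num)⟩
      · have hp := hIoo x ⟨h0, h1⟩
        have himg : h2inv '' (Icc 0 (Real.log 2)) ∈ nhds (h2inv x) := by
          apply Filter.mem_of_superset (Icc_mem_nhds hp.1 hp.2)
          intro p hpm
          exact ⟨h2 p, h2_mem_Icc hpm, hleft p hpm⟩
        exact (hinvmono.continuousAt_of_image_mem_nhds (Icc_mem_nhds h0 h1) himg).continuousWithinAt
  -- continuity of the target function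
  have hcontf : ContinuousOn (fun H₁ => h2 (binConv (h2inv H₁) a)) (Icc 0 (Real.log 2)) := by
    have hc1 : Continuous (fun p : ℝ => h2 (binConv p a)) := by
      apply h2_continuous.comp
      unfold binConv
      fun_prop
    exact hc1.comp_continuousOn hcont
  -- derivative
  have hfd : ∀ x ∈ Ioo (0:ℝ) (Real.log 2),
      HasDerivAt (fun H₁ => h2 (binConv (h2inv H₁) a))
        ((1 - 2*a) * (mglL (a + (1 - 2*a) * h2inv x) / mglL (h2inv x))) x := by
    intro x hx
    set p := h2inv x with hp_def
    have hpm : p ∈ Ioo (0:ℝ) (1/2) := hIoo x hx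
    have hLp : 0 < mglL p := mglL_pos hpm
    have hca : ContinuousAt h2inv x :=
      (hcont x (Ioo_subset_Icc_self hx)).continuousAt (Icc_mem_nhds hx.1 hx.2)
    have hdinv : HasDerivAt h2inv (mglL p)⁻¹ x := by
      apply HasDerivAt.of_local_left_inverse hca
        (hasDerivAt_h2 (ne_of_gt hpm.1) (ne_of_lt (show p < 1 by linarith [hpm.2])))
        (ne_of_gt hLp)
      exact Filter.eventually_of_mem (Icc_mem_nhds hx.1 hx.2) (fun y hy => (hinv y hy).2)
    set q := a + (1 - 2*a) * p with hq_def
    have hqm : q ∈ Ioo (0:ℝ) (1/2) := by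
      constructor
      · nlinarith [hpm.1]
      · nlinarith [hpm.2]
    have hinner : HasDerivAt (fun H : ℝ => a + (1 - 2*a) * h2inv H)
        ((1 - 2*a) * (mglL p)⁻¹) x := (hdinv.const_mul (1 - 2*a)).const_add a
    have houter : HasDerivAt h2 (mglL q) q :=
      hasDerivAt_h2 (ne_of_gt hqm.1) (ne_of_lt (show q < 1 by linarith [hqm.2]))
    have hcomp := houter.comp x hinner
    have heq : (fun H₁ => h2 (binConv (h2inv H₁) a))
        = h2 ∘ (fun H : ℝ => a + (1 - 2*a) * h2inv H) := by
      funext H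
      simp only [Function.comp_apply, binConv]
      ring_nf
    rw [heq]
    refine hcomp.congr_deriv ?_
    rw [div_eq_mul_inv]
    ring
  have hderiv : ∀ x ∈ Ioo (0:ℝ) (Real.log 2),
      deriv (fun H₁ => h2 (binConv (h2inv H₁) a)) x
        = (1 - 2*a) * (mglL (a + (1 - 2*a) * h2inv x) / mglL (h2inv x)) :=
    fun x hx => (hfd x hx).deriv
  apply MonotoneOn.convexOn_of_deriv (convex_Icc _ _) hcontf
  · rw [interior_Icc]
    exact fun x hx => (hfd x hx).differentiableAt.differentiableWithinAt
  · rw [interior_Icc]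
    intro x hx y hy hxy
    rw [hderiv x hx, hderiv y hy]
    apply mul_le_mul_of_nonneg_left _ (by linarith : (0:ℝ) ≤ 1 - 2*a)
    exact mgl_ratio_mono ha0 hlt (hIoo x hx) (hIoo y hy)
      (hinvmono.monotoneOn (Ioo_subset_Icc_self hx) (Ioo_subset_Icc_self hy) hxy)
end

section
/- Fidelity lower bound for channel entropy: Let σ₀, σ₁ be density matrices on ℂ^d, f := F(σ₀,σ₁), and H := log 2 − H((σ₀+σ₁)/2) + (H(σ₀)+H(σ₁))/2. Then e^H − 1 ≤ f. In particular H ≤ log(1+f). -/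
open Matrix Classical
open scoped Kronecker ComplexOrder

/-- von Neumann entropy `H(ρ) = -tr ρ log ρ`, via eigenvalues (natural log). -/
noncomputable def vN {n : Type*} [Fintype n] [DecidableEq n] (ρ : Matrix n n ℂ) : ℝ :=
  if h : ρ.IsHermitian then -∑ i, h.eigenvalues i * Real.log (h.eigenvalues i) else 0

/-- positive semidefinite square root (0 if not PSD). -/
noncomputable def msqrt {n : Type*} [Fintype n] [DecidableEq n] (A : Matrix n n ℂ) :
    Matrix n n ℂ :=
  if h : A.PosSemidef then
    (h.1.eigenvectorUnitary : Matrix n n ℂ) *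
      Matrix.diagonal (fun i => ((Real.sqrt (h.1.eigenvalues i) : ℝ) : ℂ)) *
      star (h.1.eigenvectorUnitary : Matrix n n ℂ)
  else 0

/-- matrix logarithm of a Hermitian matrix via spectral decomposition. -/
noncomputable def mlog {n : Type*} [Fintype n] [DecidableEq n] (A : Matrix n n ℂ) :
    Matrix n n ℂ :=
  if h : A.IsHermitian then
    (h.eigenvectorUnitary : Matrix n n ℂ) *
      Matrix.diagonal (fun i => (Real.log (h.eigenvalues i) : ℂ)) *
      star (h.eigenvectorUnitary : Matrix n n ℂ)
  else 0

/-- quantum relative entropy `D(ρ‖σ) = tr ρ (log ρ - log σ)`. -/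
noncomputable def relEnt {n : Type*} [Fintype n] [DecidableEq n] (ρ σ : Matrix n n ℂ) : ℝ :=
  ((ρ * (mlog ρ - mlog σ)).trace).re

/-- trace norm `‖A‖₁ = tr √(A† A)`. -/
noncomputable def traceNorm {n : Type*} [Fintype n] [DecidableEq n] (A : Matrix n n ℂ) : ℝ :=
  ((msqrt (Aᴴ * A)).trace).re

/-- (root) fidelity `F(ρ,σ) = ‖√ρ √σ‖₁`. -/
noncomputable def Fid {n : Type*} [Fintype n] [DecidableEq n] (ρ σ : Matrix n n ℂ) : ℝ :=
  traceNorm (msqrt ρ * msqrt σ)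

/-- density matrix predicate. -/
def IsDensity {n : Type*} [Fintype n] [DecidableEq n] (ρ : Matrix n n ℂ) : Prop :=
  ρ.PosSemidef ∧ ρ.trace = 1

set_option linter.unusedSectionVars false
set_option maxHeartbeats 1000000

namespace Matrix
variable {n : Type*} [Fintype n] [DecidableEq n]
noncomputable def PosSemidef.sqrt {A : Matrix n n ℂ} (hA : A.PosSemidef) : Matrix n n ℂ :=
  (hA.1.eigenvectorUnitary : Matrix n n ℂ) *
    Matrix.diagonal (fun i => ((Real.sqrt (hA.1.eigenvalues i) : ℝ) : ℂ)) *
    star (hA.1.eigenvectorUnitary : Matrix n n ℂ)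

lemma IsHermitian.star_mul_self_mul_eq_diagonal {A : Matrix n n ℂ} (hA : A.IsHermitian) :
    star (hA.eigenvectorUnitary : Matrix n n ℂ) * A * (hA.eigenvectorUnitary : Matrix n n ℂ)
      = diagonal (RCLike.ofReal ∘ hA.eigenvalues) := by
  have h1 := Unitary.coe_star_mul_self hA.eigenvectorUnitary
  have hs := hA.spectral_theorem
  rw [Unitary.conjStarAlgAut_apply] at hs
  calc _ = star (hA.eigenvectorUnitary : Matrix n n ℂ) * ((hA.eigenvectorUnitary : Matrix n n ℂ) *
        diagonal (RCLike.ofReal ∘ hA.eigenvalues) * star (hA.eigenvectorUnitary : Matrix n n ℂ)) *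
        (hA.eigenvectorUnitary : Matrix n n ℂ) := by rw [← hs]
    _ = (star (hA.eigenvectorUnitary : Matrix n n ℂ) * (hA.eigenvectorUnitary : Matrix n n ℂ)) *
        diagonal (RCLike.ofReal ∘ hA.eigenvalues) *
        (star (hA.eigenvectorUnitary : Matrix n n ℂ) * (hA.eigenvectorUnitary : Matrix n n ℂ)) := by
          simp only [Matrix.mul_assoc]
    _ = _ := by rw [h1, Matrix.one_mul, Matrix.mul_one]

lemma PosSemidef.sqrt_mul_self {A : Matrix n n ℂ} (hA : A.PosSemidef) :
    hA.sqrt * hA.sqrt = A := by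
  have h1 := Unitary.coe_star_mul_self hA.1.eigenvectorUnitary
  have hd : Matrix.diagonal (fun i => ((Real.sqrt (hA.1.eigenvalues i) : ℝ) : ℂ)) *
      Matrix.diagonal (fun i => ((Real.sqrt (hA.1.eigenvalues i) : ℝ) : ℂ))
      = diagonal (RCLike.ofReal ∘ hA.1.eigenvalues) := by
    rw [diagonal_mul_diagonal]
    congr 1; funext i
    simp only [Function.comp_apply]
    rw [← Complex.ofReal_mul, Real.mul_self_sqrt (hA.eigenvalues_nonneg i)]
    rfl
  conv_rhs => rw [hA.1.spectral_theorem, Unitary.conjStarAlgAut_apply]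
  rw [← hd]
  unfold PosSemidef.sqrt
  calc _ = (hA.1.eigenvectorUnitary : Matrix n n ℂ) *
        Matrix.diagonal (fun i => ((Real.sqrt (hA.1.eigenvalues i) : ℝ) : ℂ)) *
        (star (hA.1.eigenvectorUnitary : Matrix n n ℂ) * (hA.1.eigenvectorUnitary : Matrix n n ℂ)) *
        Matrix.diagonal (fun i => ((Real.sqrt (hA.1.eigenvalues i) : ℝ) : ℂ)) *
        star (hA.1.eigenvectorUnitary : Matrix n n ℂ) := by simp only [Matrix.mul_assoc]
    _ = _ := by rw [h1, Matrix.mul_one]; simp only [Matrix.mul_assoc]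

lemma PosSemidef.posSemidef_sqrt {A : Matrix n n ℂ} (hA : A.PosSemidef) :
    hA.sqrt.PosSemidef := by
  unfold PosSemidef.sqrt
  have hD : (Matrix.diagonal (fun i => ((Real.sqrt (hA.1.eigenvalues i) : ℝ) : ℂ))).PosSemidef := by
    have : Matrix.diagonal (fun i => ((Real.sqrt (hA.1.eigenvalues i) : ℝ) : ℂ)) =
      (Matrix.diagonal (fun i => ((Real.sqrt (Real.sqrt (hA.1.eigenvalues i)) : ℝ) : ℂ)))ᴴ *
      Matrix.diagonal (fun i => ((Real.sqrt (Real.sqrt (hA.1.eigenvalues i)) : ℝ) : ℂ)) := by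
      rw [diagonal_conjTranspose, diagonal_mul_diagonal]
      congr 1; funext i
      simp only [Pi.star_apply, Complex.star_def, Complex.conj_ofReal]
      rw [← Complex.ofReal_mul, Real.mul_self_sqrt (Real.sqrt_nonneg _)]
    rw [this]; exact posSemidef_conjTranspose_mul_self _
  have := hD.mul_mul_conjTranspose_same (hA.1.eigenvectorUnitary : Matrix n n ℂ)
  rwa [← star_eq_conjTranspose] at this
end Matrix

section Aux
variable {n : Type*} [Fintype n] [DecidableEq n]


/-- Cauchy-Schwarz for complex sums. -/
lemma cs_complex (a b : n → ℂ) :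
    ‖∑ k, (starRingEnd ℂ) (a k) * b k‖ ≤
      Real.sqrt (∑ k, Complex.normSq (a k)) * Real.sqrt (∑ k, Complex.normSq (b k)) := by
  calc ‖∑ k, (starRingEnd ℂ) (a k) * b k‖ ≤ ∑ k, ‖(starRingEnd ℂ) (a k) * b k‖ :=
        norm_sum_le _ _
    _ = ∑ k, ‖a k‖ * ‖b k‖ := by
        simp [norm_mul]
    _ ≤ Real.sqrt (∑ k, Complex.normSq (a k)) * Real.sqrt (∑ k, Complex.normSq (b k)) := by
        have h := Finset.sum_mul_sq_le_sq_mul_sq Finset.univ (fun k => ‖a k‖) (fun k => ‖b k‖)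
        have h1 : ∀ z : ℂ, Complex.normSq z = ‖z‖ ^ 2 := by
          intro z; rw [Complex.normSq_eq_norm_sq]
        simp only [h1]
        have hnn : (0:ℝ) ≤ ∑ k, ‖b k‖ ^ 2 := by positivity
        calc ∑ k, ‖a k‖ * ‖b k‖ = Real.sqrt ((∑ k, ‖a k‖ * ‖b k‖)^2) := by
              rw [Real.sqrt_sq (by positivity)]
          _ ≤ Real.sqrt ((∑ k, ‖a k‖ ^ 2) * ∑ k, ‖b k‖ ^ 2) := Real.sqrt_le_sqrt h
          _ = _ := Real.sqrt_mul (by positivity) _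

/-- trace is invariant under unitary conjugation. -/
lemma trace_unitary_conj (U : Matrix.unitaryGroup n ℂ) (A : Matrix n n ℂ) :
    ((star (U : Matrix n n ℂ)) * A * (U : Matrix n n ℂ)).trace = A.trace := by
  rw [Matrix.trace_mul_comm, ← Matrix.mul_assoc,
    Matrix.mem_unitaryGroup_iff.mp U.2, Matrix.one_mul]

lemma trace_unitary_conj' (U : Matrix.unitaryGroup n ℂ) (A : Matrix n n ℂ) :
    ((U : Matrix n n ℂ) * A * (star (U : Matrix n n ℂ))).trace = A.trace := by
  rw [Matrix.trace_mul_comm, ← Matrix.mul_assoc,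
    Matrix.mem_unitaryGroup_iff'.mp U.2, Matrix.one_mul]

/-- columns of a unitary matrix are unit vectors. -/
lemma sum_normSq_col (U : Matrix.unitaryGroup n ℂ) (j : n) :
    ∑ k, Complex.normSq ((U : Matrix n n ℂ) k j) = 1 := by
  have h := Matrix.mem_unitaryGroup_iff'.mp U.2
  have h2 := congrArg (fun M => M j j) h
  simp only [Matrix.mul_apply, Matrix.one_apply_eq] at h2
  have h3 : ∀ k, (star (U : Matrix n n ℂ)) j k * (U : Matrix n n ℂ) k j
      = (Complex.normSq ((U : Matrix n n ℂ) k j) : ℂ) := by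
    intro k
    rw [Matrix.star_apply]
    simp [Complex.star_def, Complex.normSq_eq_conj_mul_self]
  rw [Finset.sum_congr rfl (fun k _ => h3 k)] at h2
  exact_mod_cast h2

/-- rows of a unitary matrix are unit vectors. -/
lemma sum_normSq_row (U : Matrix.unitaryGroup n ℂ) (i : n) :
    ∑ k, Complex.normSq ((U : Matrix n n ℂ) i k) = 1 := by
  have h := Matrix.mem_unitaryGroup_iff.mp U.2
  have h2 := congrArg (fun M => M i i) h
  simp only [Matrix.mul_apply, Matrix.one_apply_eq] at h2
  have h3 : ∀ k, (U : Matrix n n ℂ) i k * (star (U : Matrix n n ℂ)) k i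
      = (Complex.normSq ((U : Matrix n n ℂ) i k) : ℂ) := by
    intro k
    rw [Matrix.star_apply, mul_comm]
    simp [Complex.star_def, Complex.normSq_eq_conj_mul_self]
  rw [Finset.sum_congr rfl (fun k _ => h3 k)] at h2
  exact_mod_cast h2

/-- diagonal entries of `Wᴴ D W` for a real diagonal `D`. -/
lemma entry_conj_diag (W : Matrix n n ℂ) (d : n → ℝ) (j : n) :
    ((Wᴴ * Matrix.diagonal (fun i => (d i : ℂ)) * W) j j)
      = ((∑ i, d i * Complex.normSq (W i j) : ℝ) : ℂ) := by
  push_cast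
  rw [Matrix.mul_apply]
  simp only [Matrix.mul_diagonal, Matrix.conjTranspose_apply]
  refine Finset.sum_congr rfl (fun k _ => ?_)
  have : (star (W k j)) * W k j = (Complex.normSq (W k j) : ℂ) := by
    simp [Complex.star_def, Complex.normSq_eq_conj_mul_self]
  calc star (W k j) * (d k : ℂ) * W k j = (d k : ℂ) * (star (W k j) * W k j) := by ring
    _ = (d k : ℂ) * (Complex.normSq (W k j) : ℂ) := by rw [this]

/-- real part of trace is at most the trace norm. -/
lemma conjTranspose_mul_self_diag (B : Matrix n n ℂ) (j : n) :
    ((Bᴴ * B) j j) = ((∑ k, Complex.normSq (B k j) : ℝ) : ℂ) := by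
  rw [Matrix.mul_apply]
  push_cast
  refine Finset.sum_congr rfl (fun k _ => ?_)
  rw [Matrix.conjTranspose_apply]
  simp [Complex.star_def, Complex.normSq_eq_conj_mul_self]

/-- real part of trace is at most the trace norm. -/
lemma re_trace_le_traceNorm (X : Matrix n n ℂ) : (X.trace).re ≤ traceNorm X := by
  have h : (Xᴴ * X).PosSemidef := Matrix.posSemidef_conjTranspose_mul_self X
  have hH := h.1
  set V := hH.eigenvectorUnitary with hV
  set ν := hH.eigenvalues with hν
  -- trace norm equals sum of sqrt eigenvalues
  have h1 : traceNorm X = ∑ j, Real.sqrt (ν j) := by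
    rw [traceNorm, msqrt, dif_pos h]
    have hs : h.sqrt = (V : Matrix n n ℂ) *
        Matrix.diagonal ((↑) ∘ Real.sqrt ∘ ν) * (star V : Matrix n n ℂ) := rfl
    rw [trace_unitary_conj' V, Matrix.trace_diagonal]
    simp
    rfl
  rw [h1]
  -- trace of X in eigenbasis of XᴴX
  have h2 : X.trace = ((star (V : Matrix n n ℂ)) * X * (V : Matrix n n ℂ)).trace :=
    (trace_unitary_conj V X).symm
  rw [h2, Matrix.trace]
  rw [Complex.re_sum]
  refine Finset.sum_le_sum (fun j _ => ?_)
  -- the j-th diagonal entry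
  have hentry : ((star (V : Matrix n n ℂ)) * X * (V : Matrix n n ℂ)).diag j
      = ∑ k, (starRingEnd ℂ) ((V : Matrix n n ℂ) k j) * ((X * (V : Matrix n n ℂ)) k j) := by
    rw [Matrix.diag_apply, Matrix.mul_assoc, Matrix.mul_apply]
    refine Finset.sum_congr rfl (fun k _ => ?_)
    rw [Matrix.star_apply]
    rfl
  rw [hentry]
  have hb : (∑ k, Complex.normSq (((X * (V : Matrix n n ℂ))) k j)) = ν j := by
    have hd := hH.star_mul_self_mul_eq_diagonal
    have : ((X * (V : Matrix n n ℂ))ᴴ * (X * (V : Matrix n n ℂ))) j j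
        = ((ν j : ℝ) : ℂ) := by
      rw [Matrix.conjTranspose_mul, Matrix.mul_assoc, ← Matrix.mul_assoc (Xᴴ)]
      have : (V : Matrix n n ℂ)ᴴ * (Xᴴ * X * (V : Matrix n n ℂ))
          = Matrix.diagonal (RCLike.ofReal ∘ ν) := by
        rw [← Matrix.mul_assoc, ← Matrix.star_eq_conjTranspose]
        exact hd
      rw [← Matrix.mul_assoc] at this ⊢
      rw [this]
      simp [Matrix.diagonal_apply]
    rw [conjTranspose_mul_self_diag] at this
    exact_mod_cast this
  calc (∑ k, (starRingEnd ℂ) ((V : Matrix n n ℂ) k j) * ((X * (V : Matrix n n ℂ)) k j)).re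
      ≤ ‖∑ k, (starRingEnd ℂ) ((V : Matrix n n ℂ) k j) * ((X * (V : Matrix n n ℂ)) k j)‖ :=
        Complex.re_le_norm _
    _ ≤ Real.sqrt (∑ k, Complex.normSq ((V : Matrix n n ℂ) k j)) *
        Real.sqrt (∑ k, Complex.normSq ((X * (V : Matrix n n ℂ)) k j)) := cs_complex _ _
    _ = Real.sqrt (ν j) := by
        rw [sum_normSq_col V j, hb, Real.sqrt_one, one_mul]

/-- trace of a PSD matrix equals (cast of) sum of eigenvalues. -/
lemma trace_eq_sum_eigenvalues {A : Matrix n n ℂ} (hA : A.IsHermitian) :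
    A.trace = ((∑ i, hA.eigenvalues i : ℝ) : ℂ) := by
  conv_lhs => rw [hA.spectral_theorem, Unitary.conjStarAlgAut_apply]
  rw [trace_unitary_conj' hA.eigenvectorUnitary, Matrix.trace_diagonal]
  push_cast
  rfl

/-- pairing of square roots as a double sum over eigenvalues. -/
lemma pairG {σ ρ : Matrix n n ℂ} (hσ : σ.PosSemidef) (hρ : ρ.PosSemidef) :
    (hσ.sqrt * hρ.sqrt).trace =
      ((∑ i, ∑ j, Real.sqrt (hσ.1.eigenvalues i) * Real.sqrt (hρ.1.eigenvalues j) *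
        Complex.normSq (((star (hσ.1.eigenvectorUnitary : Matrix n n ℂ)) *
          (hρ.1.eigenvectorUnitary : Matrix n n ℂ)) i j) : ℝ) : ℂ) := by
  set U := (hσ.1.eigenvectorUnitary : Matrix n n ℂ)
  set V := (hρ.1.eigenvectorUnitary : Matrix n n ℂ)
  set W := star U * V with hW
  set Dσ := Matrix.diagonal ((↑) ∘ Real.sqrt ∘ hσ.1.eigenvalues : n → ℂ)
  set Dρ := Matrix.diagonal ((↑) ∘ Real.sqrt ∘ hρ.1.eigenvalues : n → ℂ)
  have hσs : hσ.sqrt = U * Dσ * star U := rfl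
  have hρs : hρ.sqrt = V * Dρ * star V := rfl
  have hcyc : (hσ.sqrt * hρ.sqrt).trace = (Wᴴ * Dσ * W * Dρ).trace := by
    rw [hσs, hρs]
    have e1 : U * Dσ * star U * (V * Dρ * star V)
        = U * (Dσ * W * Dρ) * star V := by
      rw [hW]; noncomm_ring
    rw [e1, Matrix.trace_mul_comm, ← Matrix.mul_assoc]
    have e2 : star V * (U * (Dσ * W * Dρ)) = Wᴴ * Dσ * W * Dρ := by
      rw [hW, Matrix.conjTranspose_mul, Matrix.star_eq_conjTranspose U,
        Matrix.conjTranspose_conjTranspose, Matrix.star_eq_conjTranspose V]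
      noncomm_ring
    rw [← Matrix.mul_assoc] at e2
    rw [e2]
  rw [hcyc]
  have htr : (Wᴴ * Dσ * W * Dρ).trace
      = ∑ j, (Wᴴ * Dσ * W) j j * ((Real.sqrt (hρ.1.eigenvalues j) : ℝ) : ℂ) := by
    rw [Matrix.trace]
    refine Finset.sum_congr rfl (fun j _ => ?_)
    rw [Matrix.diag_apply, Matrix.mul_diagonal]
    rfl
  rw [htr]
  have hDσ : Dσ = Matrix.diagonal (fun i => ((Real.sqrt (hσ.1.eigenvalues i) : ℝ) : ℂ)) := rfl
  push_cast
  rw [Finset.sum_comm]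
  refine Finset.sum_congr rfl (fun j _ => ?_)
  rw [hDσ, entry_conj_diag W (fun i => Real.sqrt (hσ.1.eigenvalues i)) j]
  push_cast
  rw [Finset.sum_mul]
  refine Finset.sum_congr rfl (fun i _ => ?_)
  ring

/-- diagonal entries of a conjugated PSD matrix as eigenvalue averages. -/
lemma pairA {σ : Matrix n n ℂ} (hσ : σ.PosSemidef) (V : Matrix.unitaryGroup n ℂ) (j : n) :
    ((star (V : Matrix n n ℂ)) * σ * (V : Matrix n n ℂ)) j j =
      ((∑ i, hσ.1.eigenvalues i *
        Complex.normSq (((star (hσ.1.eigenvectorUnitary : Matrix n n ℂ)) *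
          (V : Matrix n n ℂ)) i j) : ℝ) : ℂ) := by
  set U := (hσ.1.eigenvectorUnitary : Matrix n n ℂ)
  set Vm := (V : Matrix n n ℂ)
  set W := star U * Vm with hW
  have hσd : σ = U * Matrix.diagonal (fun i => ((hσ.1.eigenvalues i : ℝ) : ℂ)) * star U := by
    have := hσ.1.spectral_theorem
    rw [Unitary.conjStarAlgAut_apply] at this
    exact this
  have e2 : star Vm * (U * Matrix.diagonal (fun i => ((hσ.1.eigenvalues i : ℝ) : ℂ)) * star U) * Vm
      = Wᴴ * Matrix.diagonal (fun i => ((hσ.1.eigenvalues i : ℝ) : ℂ)) * W := by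
    rw [hW, Matrix.conjTranspose_mul, Matrix.star_eq_conjTranspose U,
      Matrix.conjTranspose_conjTranspose, Matrix.star_eq_conjTranspose Vm]
    noncomm_ring
  rw [← hσd] at e2
  rw [e2, entry_conj_diag]

lemma sum_pair {M : Type*} [AddCommMonoid M] (f : n → n → M) :
    ∑ p : n × n, f p.1 p.2 = ∑ i, ∑ j, f i j := by
  rw [← Finset.univ_product_univ, Finset.sum_product]

/-- classical Jensen step: `exp(-D) ≤ G²` and `0 < G`. -/
lemma jensen_pair (lam mu : n → ℝ) (c : n → n → ℝ)
    (hlam : ∀ i, 0 ≤ lam i) (hc : ∀ i j, 0 ≤ c i j)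
    (hsum : ∑ p : n × n, lam p.1 * c p.1 p.2 = 1)
    (hdom : ∀ i j, lam i * c i j ≤ 2 * mu j) :
    Real.exp (∑ p : n × n, lam p.1 * c p.1 p.2 * (Real.log (mu p.2) - Real.log (lam p.1)))
      ≤ (∑ p : n × n, Real.sqrt (lam p.1) * Real.sqrt (mu p.2) * c p.1 p.2) ^ 2 ∧
    0 < ∑ p : n × n, Real.sqrt (lam p.1) * Real.sqrt (mu p.2) * c p.1 p.2 := by
  classical
  set w : n × n → ℝ := fun p => lam p.1 * c p.1 p.2 with hw
  set x : n × n → ℝ := fun p => Real.sqrt (mu p.2) / Real.sqrt (lam p.1) with hx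
  set S : Finset (n × n) := Finset.univ.filter (fun p => w p ≠ 0) with hS
  have hwnn : ∀ p : n × n, 0 ≤ w p := fun p => mul_nonneg (hlam _) (hc _ _)
  have hmemS : ∀ p ∈ S, 0 < lam p.1 ∧ 0 < c p.1 p.2 ∧ 0 < mu p.2 := by
    intro p hp
    have hne : w p ≠ 0 := (Finset.mem_filter.mp hp).2
    have hwpos : 0 < w p := lt_of_le_of_ne (hwnn p) (Ne.symm hne)
    have hl : 0 < lam p.1 := by
      rcases lt_or_eq_of_le (hlam p.1) with h | h
      · exact h
      · exfalso; apply hne; rw [hw]; simp [← h]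
    have hcp : 0 < c p.1 p.2 := by
      rcases lt_or_eq_of_le (hc p.1 p.2) with h | h
      · exact h
      · exfalso; apply hne; rw [hw]; simp [← h]
    have hm : 0 < mu p.2 := by
      have := hdom p.1 p.2
      nlinarith
    exact ⟨hl, hcp, hm⟩
  have hwsum : ∑ p ∈ S, w p = 1 := by
    rw [hS, Finset.sum_filter_ne_zero]
    exact hsum
  have hSne : S.Nonempty := by
    by_contra hemp
    rw [Finset.not_nonempty_iff_eq_empty] at hemp
    rw [hemp, Finset.sum_empty] at hwsum
    norm_num at hwsum
  set A : ℝ := ∑ p ∈ S, w p * x p with hA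
  have hAeq : A = ∑ p ∈ S, Real.sqrt (lam p.1) * Real.sqrt (mu p.2) * c p.1 p.2 := by
    refine Finset.sum_congr rfl (fun p hp => ?_)
    obtain ⟨hl, hcp, hm⟩ := hmemS p hp
    have hls : Real.sqrt (lam p.1) ≠ 0 := ne_of_gt (Real.sqrt_pos.mpr hl)
    show lam p.1 * c p.1 p.2 * (Real.sqrt (mu p.2) / Real.sqrt (lam p.1))
        = Real.sqrt (lam p.1) * Real.sqrt (mu p.2) * c p.1 p.2
    rw [mul_div_assoc', eq_comm, eq_div_iff hls]
    linear_combination (c p.1 p.2 * Real.sqrt (mu p.2)) * Real.mul_self_sqrt hl.le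
  set G : ℝ := ∑ p : n × n, Real.sqrt (lam p.1) * Real.sqrt (mu p.2) * c p.1 p.2 with hG
  have hAG : A ≤ G := by
    rw [hAeq, hG]
    refine Finset.sum_le_sum_of_subset_of_nonneg (Finset.filter_subset _ _) ?_
    intro p _ _
    exact mul_nonneg (mul_nonneg (Real.sqrt_nonneg _) (Real.sqrt_nonneg _)) (hc _ _)
  have hApos : 0 < A := by
    rw [hAeq]
    refine Finset.sum_pos (fun p hp => ?_) hSne
    obtain ⟨hl, hcp, hm⟩ := hmemS p hp
    exact mul_pos (mul_pos (Real.sqrt_pos.mpr hl) (Real.sqrt_pos.mpr hm)) hcp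
  have hGpos : 0 < G := lt_of_lt_of_le hApos hAG
  have hjen : ∑ p ∈ S, w p • Real.log (x p) ≤ Real.log (∑ p ∈ S, w p • x p) := by
    refine (StrictConcaveOn.concaveOn strictConcaveOn_log_Ioi).le_map_sum
      (fun p _ => hwnn p) hwsum (fun p hp => ?_)
    obtain ⟨hl, hcp, hm⟩ := hmemS p hp
    rw [hx]
    exact Set.mem_Ioi.mpr (by positivity)
  simp only [smul_eq_mul] at hjen
  have hE : (∑ p : n × n, w p * (Real.log (mu p.2) - Real.log (lam p.1)))
      = ∑ p ∈ S, w p * (2 * Real.log (x p)) := by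
    rw [← Finset.sum_filter_of_ne (p := fun p => w p ≠ 0)
      (f := fun p => w p * (Real.log (mu p.2) - Real.log (lam p.1)))]
    · rw [← hS]
      refine Finset.sum_congr rfl (fun p hp => ?_)
      obtain ⟨hl, hcp, hm⟩ := hmemS p hp
      have hxval : Real.log (x p) = Real.log (mu p.2) / 2 - Real.log (lam p.1) / 2 := by
        rw [hx]
        simp only
        rw [Real.log_div (ne_of_gt (Real.sqrt_pos.mpr hm)) (ne_of_gt (Real.sqrt_pos.mpr hl)),
          Real.log_sqrt (le_of_lt hm), Real.log_sqrt (le_of_lt hl)]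
      rw [hxval]; ring
    · intro p _ hne hwp
      apply hne
      rw [hwp, zero_mul]
  constructor
  · rw [hE]
    have hstep : ∑ p ∈ S, w p * (2 * Real.log (x p)) = 2 * ∑ p ∈ S, w p * Real.log (x p) := by
      rw [Finset.mul_sum]; exact Finset.sum_congr rfl (fun p _ => by ring)
    rw [hstep]
    have hlog : ∑ p ∈ S, w p * Real.log (x p) ≤ Real.log G :=
      le_trans hjen (Real.log_le_log hApos hAG)
    have h1 : Real.exp (2 * ∑ p ∈ S, w p * Real.log (x p)) ≤ Real.exp (2 * Real.log G) :=
      Real.exp_le_exp.mpr (by linarith)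
    have h2 : Real.exp (2 * Real.log G) = G ^ 2 := by
      rw [two_mul, Real.exp_add, Real.exp_log hGpos, sq]
    rw [h2] at h1
    exact h1
  · exact hGpos

/-- trace of the square of a Hermitian matrix as sum of `normSq` of entries. -/
lemma herm_trace_sq {X : Matrix n n ℂ} (hX : X.IsHermitian) :
    ((X * X).trace).re = ∑ p : n × n, Complex.normSq (X p.1 p.2) := by
  rw [sum_pair (fun i j => Complex.normSq (X i j)), Matrix.trace, Complex.re_sum]
  refine Finset.sum_congr rfl (fun i _ => ?_)
  rw [Matrix.diag_apply, Matrix.mul_apply, Complex.re_sum]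
  refine Finset.sum_congr rfl (fun j _ => ?_)
  have hXji : X j i = (starRingEnd ℂ) (X i j) := by
    conv_lhs => rw [← hX]
    rfl
  rw [hXji, mul_comm, ← Complex.normSq_eq_conj_mul_self]
  simp


lemma herm_CS {X Y : Matrix n n ℂ} (hX : X.IsHermitian) (hY : Y.IsHermitian) :
    |((X * Y).trace).re| ≤
      Real.sqrt (((X * X).trace).re) * Real.sqrt (((Y * Y).trace).re) := by
  have htr : (X * Y).trace = ∑ p : n × n, (starRingEnd ℂ) (Y p.1 p.2) * (X p.1 p.2) := by
    rw [sum_pair (fun i j => ((starRingEnd ℂ) (Y i j) * (X i j))), Matrix.trace]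
    refine Finset.sum_congr rfl (fun i _ => ?_)
    rw [Matrix.diag_apply, Matrix.mul_apply]
    refine Finset.sum_congr rfl (fun j _ => ?_)
    have hYji : Y j i = (starRingEnd ℂ) (Y i j) := by
      conv_lhs => rw [← hY]
      rfl
    rw [hYji]; ring
  have hcs := cs_complex (fun p : n × n => Y p.1 p.2) (fun p : n × n => X p.1 p.2)
  rw [htr, herm_trace_sq hX, herm_trace_sq hY]
  refine le_trans (Complex.abs_re_le_norm _) (le_trans hcs ?_)
  rw [mul_comm]


variable {n : Type*} [Fintype n] [DecidableEq n]

lemma psd_half {A : Matrix n n ℂ} (hA : A.PosSemidef) : (((1:ℂ)/2) • A).PosSemidef := by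
  exact hA.smul (by norm_num [Complex.le_def])

lemma psd_re_trace_nonneg {A : Matrix n n ℂ} (hA : A.PosSemidef) : 0 ≤ (A.trace).re := by
  rw [trace_eq_sum_eigenvalues hA.1, Complex.ofReal_re]
  exact Finset.sum_nonneg (fun i _ => hA.eigenvalues_nonneg i)

lemma re_trace_mul_psd_nonneg {A B : Matrix n n ℂ} (hA : A.PosSemidef) (hB : B.PosSemidef) :
    0 ≤ ((A * B).trace).re := by
  obtain ⟨C, hC⟩ : ∃ C : Matrix n n ℂ, A = Cᴴ * C :=
    ⟨hA.sqrt, by rw [hA.posSemidef_sqrt.1.eq, hA.sqrt_mul_self]⟩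
  have h1 : (A * B).trace = (C * B * Cᴴ).trace := by
    rw [hC, Matrix.mul_assoc, Matrix.trace_mul_comm, Matrix.mul_assoc]
  rw [h1]
  exact psd_re_trace_nonneg (hB.mul_mul_conjTranspose_same C)



/-- diagonal entries of a PSD matrix have nonnegative real part. -/
lemma psd_diag_re_nonneg {A : Matrix n n ℂ} (hA : A.PosSemidef) (j : n) : 0 ≤ (A j j).re := by
  have h := hA.re_dotProduct_nonneg (Pi.single j 1)
  have he : dotProduct (star (Pi.single j 1 : n → ℂ)) (A *ᵥ (Pi.single j 1)) = A j j := by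
    rw [← Pi.single_star, star_one, single_one_dotProduct]
    simp [Matrix.mulVec_single]
  rw [he] at h
  exact h

/-- the key per-pair inequality. -/
lemma pair_main {σ ρ : Matrix n n ℂ} (hσ : σ.PosSemidef) (hρ : ρ.PosSemidef)
    (hσtr : σ.trace = 1)
    (hdom : ∀ j, (((star (hρ.1.eigenvectorUnitary : Matrix n n ℂ)) * σ *
        (hρ.1.eigenvectorUnitary : Matrix n n ℂ)) j j).re ≤ 2 * hρ.1.eigenvalues j) :
    Real.exp ((∑ j, (((star (hρ.1.eigenvectorUnitary : Matrix n n ℂ)) * σ *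
          (hρ.1.eigenvectorUnitary : Matrix n n ℂ)) j j).re * Real.log (hρ.1.eigenvalues j))
        + vN σ)
      ≤ ((hσ.sqrt * hρ.sqrt).trace).re ^ 2
    ∧ 0 < ((hσ.sqrt * hρ.sqrt).trace).re := by
  classical
  set lam : n → ℝ := hσ.1.eigenvalues with hlam
  set mu : n → ℝ := hρ.1.eigenvalues with hmu
  set W : Matrix n n ℂ := (star (hσ.1.eigenvectorUnitary : Matrix n n ℂ)) *
    (hρ.1.eigenvectorUnitary : Matrix n n ℂ) with hWdef
  set c : n → n → ℝ := fun i j => Complex.normSq (W i j) with hc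
  -- the diagonal entries
  have hb : ∀ j, (((star (hρ.1.eigenvectorUnitary : Matrix n n ℂ)) * σ *
      (hρ.1.eigenvectorUnitary : Matrix n n ℂ)) j j).re = ∑ i, lam i * c i j := by
    intro j
    rw [pairA hσ hρ.1.eigenvectorUnitary j, Complex.ofReal_re]
  -- vN value
  have hvN : vN σ = -∑ i, lam i * Real.log (lam i) := by
    rw [vN, dif_pos hσ.1]
  -- coe of the unitary product
  have hWcoe : ((star hσ.1.eigenvectorUnitary * hρ.1.eigenvectorUnitary :
      Matrix.unitaryGroup n ℂ) : Matrix n n ℂ) = W := by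
    rw [Submonoid.coe_mul]
    congr 1
  have hrow : ∀ i, ∑ j, c i j = 1 := by
    intro i
    have := sum_normSq_row (star hσ.1.eigenvectorUnitary * hρ.1.eigenvectorUnitary) i
    rw [hWcoe] at this
    exact this
  have hlamnn : ∀ i, 0 ≤ lam i := fun i => hσ.eigenvalues_nonneg i
  have hcnn : ∀ i j, 0 ≤ c i j := fun i j => Complex.normSq_nonneg _
  have hsumlam : ∑ i, lam i = 1 := by
    have := trace_eq_sum_eigenvalues hσ.1
    rw [hσtr] at this
    exact_mod_cast this.symm
  have hpairsum : ∑ p : n × n, lam p.1 * c p.1 p.2 = 1 := by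
    rw [sum_pair (fun i j => lam i * c i j)]
    calc ∑ i, ∑ j, lam i * c i j = ∑ i, lam i * ∑ j, c i j := by
          refine Finset.sum_congr rfl fun i _ => (Finset.mul_sum _ _ _).symm
      _ = 1 := by
          rw [Finset.sum_congr rfl fun i _ => by rw [hrow i, mul_one]]
          exact hsumlam
  have hdom' : ∀ i j, lam i * c i j ≤ 2 * mu j := by
    intro i j
    have h1 : lam i * c i j ≤ ∑ k, lam k * c k j :=
      Finset.single_le_sum (f := fun k => lam k * c k j)
        (fun k _ => mul_nonneg (hlamnn k) (hcnn k j)) (Finset.mem_univ i)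
    have h2 := hdom j
    rw [hb j] at h2
    exact le_trans h1 h2
  obtain ⟨hjexp, hGpos⟩ := jensen_pair lam mu c hlamnn hcnn hpairsum hdom'
  -- identify G with the trace
  have hGeq : ((hσ.sqrt * hρ.sqrt).trace).re
      = ∑ p : n × n, Real.sqrt (lam p.1) * Real.sqrt (mu p.2) * c p.1 p.2 := by
    rw [pairG hσ hρ, Complex.ofReal_re, sum_pair (fun i j =>
      Real.sqrt (lam i) * Real.sqrt (mu j) * c i j)]
  -- identify the exponent
  have hexparg : (∑ j, (((star (hρ.1.eigenvectorUnitary : Matrix n n ℂ)) * σ *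
          (hρ.1.eigenvectorUnitary : Matrix n n ℂ)) j j).re * Real.log (mu j)) + vN σ
      = ∑ p : n × n, lam p.1 * c p.1 p.2 * (Real.log (mu p.2) - Real.log (lam p.1)) := by
    rw [hvN]
    rw [Finset.sum_congr rfl fun j _ => by rw [hb j]]
    rw [sum_pair (fun i j => lam i * c i j * (Real.log (mu j) - Real.log (lam i)))]
    have h1 : ∑ j, (∑ i, lam i * c i j) * Real.log (mu j)
        = ∑ i, ∑ j, lam i * c i j * Real.log (mu j) := by
      rw [Finset.sum_comm]
      refine Finset.sum_congr rfl fun j _ => ?_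
      rw [Finset.sum_mul]
    have h2 : ∑ i, lam i * Real.log (lam i)
        = ∑ i, ∑ j, lam i * c i j * Real.log (lam i) := by
      refine Finset.sum_congr rfl fun i _ => ?_
      calc lam i * Real.log (lam i) = (lam i * Real.log (lam i)) * ∑ j, c i j := by
            rw [hrow i, mul_one]
        _ = ∑ j, lam i * c i j * Real.log (lam i) := by
            rw [Finset.mul_sum]
            exact Finset.sum_congr rfl fun j _ => by ring
    rw [h1, h2, ← sub_eq_add_neg, ← Finset.sum_sub_distrib]
    refine Finset.sum_congr rfl fun i _ => ?_
    rw [← Finset.sum_sub_distrib]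
    refine Finset.sum_congr rfl fun j _ => by ring
  rw [hexparg, hGeq]
  exact ⟨hjexp, hGpos⟩

end Aux

/-- Fidelity lower bound for channel entropy: with `f = F(σ₀,σ₁)` and
`H = log 2 − H((σ₀+σ₁)/2) + (H(σ₀)+H(σ₁))/2`, one has `e^H − 1 ≤ f`,
in particular `H ≤ log(1+f)`. -/
theorem exp_H_sub_one_le_fidelity {d : ℕ} (σ₀ σ₁ : Matrix (Fin d) (Fin d) ℂ)
    (h₀ : IsDensity σ₀) (h₁ : IsDensity σ₁) (f H : ℝ)
    (hf : f = Fid σ₀ σ₁)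
    (hH : H = Real.log 2 - vN (((1:ℂ)/2) • (σ₀ + σ₁)) + (vN σ₀ + vN σ₁) / 2) :
    Real.exp H - 1 ≤ f ∧ H ≤ Real.log (1 + f) := by
  obtain ⟨hσ₀psd, hσ₀tr⟩ := h₀
  obtain ⟨hσ₁psd, hσ₁tr⟩ := h₁
  have hρpsd : (((1:ℂ)/2) • (σ₀ + σ₁)).PosSemidef := psd_half (hσ₀psd.add hσ₁psd)
  have hρtr : (((1:ℂ)/2) • (σ₀ + σ₁)).trace = 1 := by
    rw [Matrix.trace_smul, Matrix.trace_add, hσ₀tr, hσ₁tr]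
    norm_num
  set V : Matrix (Fin d) (Fin d) ℂ := (hρpsd.1.eigenvectorUnitary : Matrix (Fin d) (Fin d) ℂ)
    with hVdef
  set mu : Fin d → ℝ := hρpsd.1.eigenvalues with hmudef
  -- diagonal entries in the eigenbasis of ρ
  have hdiagmu : star V * (((1:ℂ)/2) • (σ₀ + σ₁)) * V
      = Matrix.diagonal (RCLike.ofReal ∘ mu) := hρpsd.1.star_mul_self_mul_eq_diagonal
  have hsplitM : star V * (((1:ℂ)/2) • (σ₀ + σ₁)) * V
      = ((1:ℂ)/2) • (star V * σ₀ * V + star V * σ₁ * V) := by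
    rw [Matrix.mul_smul, Matrix.smul_mul, Matrix.mul_add, Matrix.add_mul]
  have havg : ∀ j, ((star V * σ₀ * V) j j).re + ((star V * σ₁ * V) j j).re = 2 * mu j := by
    intro j
    have h1 := congrArg (fun M => (M j j).re) (hsplitM.symm.trans hdiagmu)
    simp only [Matrix.smul_apply, Matrix.add_apply, Matrix.diagonal_apply_eq,
      smul_eq_mul, Complex.mul_re] at h1
    norm_num at h1
    linarith [h1]
  have hpsd0V : (star V * σ₀ * V).PosSemidef := by
    rw [Matrix.star_eq_conjTranspose]
    exact hσ₀psd.conjTranspose_mul_mul_same V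
  have hpsd1V : (star V * σ₁ * V).PosSemidef := by
    rw [Matrix.star_eq_conjTranspose]
    exact hσ₁psd.conjTranspose_mul_mul_same V
  have hdom0 : ∀ j, ((star V * σ₀ * V) j j).re ≤ 2 * mu j := by
    intro j
    have := psd_diag_re_nonneg hpsd1V j
    linarith [havg j]
  have hdom1 : ∀ j, ((star V * σ₁ * V) j j).re ≤ 2 * mu j := by
    intro j
    have := psd_diag_re_nonneg hpsd0V j
    linarith [havg j]
  obtain ⟨hexp0, hg0pos⟩ := pair_main hσ₀psd hρpsd hσ₀tr hdom0
  obtain ⟨hexp1, hg1pos⟩ := pair_main hσ₁psd hρpsd hσ₁tr hdom1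
  set g0 : ℝ := ((hσ₀psd.sqrt * hρpsd.sqrt).trace).re with hg0def
  set g1 : ℝ := ((hσ₁psd.sqrt * hρpsd.sqrt).trace).re with hg1def
  set S0 : ℝ := (∑ j, ((star V * σ₀ * V) j j).re * Real.log (mu j)) + vN σ₀ with hS0def
  set S1 : ℝ := (∑ j, ((star V * σ₁ * V) j j).re * Real.log (mu j)) + vN σ₁ with hS1def
  -- entropy identity : H = log 2 + (S0 + S1)/2
  have hvNρ : vN (((1:ℂ)/2) • (σ₀ + σ₁)) = -∑ j, mu j * Real.log (mu j) := by
    rw [vN, dif_pos hρpsd.1]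
  have hsumS : (∑ j, ((star V * σ₀ * V) j j).re * Real.log (mu j))
      + (∑ j, ((star V * σ₁ * V) j j).re * Real.log (mu j))
      = 2 * ∑ j, mu j * Real.log (mu j) := by
    rw [← Finset.sum_add_distrib, Finset.mul_sum]
    refine Finset.sum_congr rfl fun j _ => ?_
    linear_combination Real.log (mu j) * havg j
  have hHid : H = Real.log 2 + (S0 + S1) / 2 := by
    rw [hH, hvNρ, hS0def, hS1def]
    have h := hsumS
    ring_nf
    ring_nf at h
    linarith
  -- exponential bound
  have hexpH : Real.exp H ≤ 2 * (g0 * g1) := by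
    rw [hHid]
    have e1 : Real.exp (Real.log 2 + (S0 + S1) / 2)
        = 2 * (Real.exp (S0 / 2) * Real.exp (S1 / 2)) := by
      rw [show Real.log 2 + (S0 + S1) / 2 = Real.log 2 + (S0 / 2 + S1 / 2) by ring,
        Real.exp_add, Real.exp_add, Real.exp_log (by norm_num : (0:ℝ) < 2)]
    rw [e1]
    have b0 : Real.exp (S0 / 2) ≤ g0 := by
      rw [Real.exp_half]
      calc Real.sqrt (Real.exp S0) ≤ Real.sqrt (g0 ^ 2) := Real.sqrt_le_sqrt hexp0
        _ = g0 := Real.sqrt_sq hg0pos.le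
    have b1 : Real.exp (S1 / 2) ≤ g1 := by
      rw [Real.exp_half]
      calc Real.sqrt (Real.exp S1) ≤ Real.sqrt (g1 ^ 2) := Real.sqrt_le_sqrt hexp1
        _ = g1 := Real.sqrt_sq hg1pos.le
    have := mul_le_mul b0 b1 (Real.exp_nonneg _) hg0pos.le
    linarith
  -- Cauchy-Schwarz bound : 2 g0 g1 ≤ 1 + t
  set B : Matrix (Fin d) (Fin d) ℂ := hρpsd.sqrt with hBdef
  set T0 : Matrix (Fin d) (Fin d) ℂ := hσ₀psd.sqrt with hT0def
  set T1 : Matrix (Fin d) (Fin d) ℂ := hσ₁psd.sqrt with hT1def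
  have hBh : B.IsHermitian := hρpsd.posSemidef_sqrt.1
  have hT0h : T0.IsHermitian := hσ₀psd.posSemidef_sqrt.1
  have hT1h : T1.IsHermitian := hσ₁psd.posSemidef_sqrt.1
  have hBB : ((B * B).trace).re = 1 := by
    rw [hBdef, hρpsd.sqrt_mul_self, hρtr]
    simp
  have hT0T0 : ((T0 * T0).trace).re = 1 := by
    rw [hT0def, hσ₀psd.sqrt_mul_self, hσ₀tr]
    simp
  have hT1T1 : ((T1 * T1).trace).re = 1 := by
    rw [hT1def, hσ₁psd.sqrt_mul_self, hσ₁tr]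
    simp
  set t : ℝ := ((T0 * T1).trace).re with htdef
  have htnn : 0 ≤ t := re_trace_mul_psd_nonneg hσ₀psd.posSemidef_sqrt hσ₁psd.posSemidef_sqrt
  have ht10 : ((T1 * T0).trace).re = t := by rw [htdef, Matrix.trace_mul_comm]
  set Y : Matrix (Fin d) (Fin d) ℂ := (g0 : ℂ) • T0 + (g1 : ℂ) • T1 with hYdef
  have hYh : Y.IsHermitian := by
    rw [Matrix.IsHermitian, hYdef, Matrix.conjTranspose_add, Matrix.conjTranspose_smul,
      Matrix.conjTranspose_smul, hT0h.eq, hT1h.eq]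
    norm_num
  have hre_smul : ∀ (r : ℝ) (z : ℂ), ((r : ℂ) * z).re = r * z.re := by
    intro r z
    simp [Complex.mul_re]
  have hBT0 : ((B * T0).trace).re = g0 := by
    rw [Matrix.trace_mul_comm]
  have hBT1 : ((B * T1).trace).re = g1 := by
    rw [Matrix.trace_mul_comm]
  have hBY : ((B * Y).trace).re = g0 * g0 + g1 * g1 := by
    rw [hYdef, Matrix.mul_add, Matrix.trace_add, mul_smul_comm, mul_smul_comm,
      Matrix.trace_smul, Matrix.trace_smul, Complex.add_re, smul_eq_mul, smul_eq_mul,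
      hre_smul, hre_smul, hBT0, hBT1]
  have hYY : ((Y * Y).trace).re = (g0 * g0 + g1 * g1) + 2 * (g0 * g1) * t := by
    rw [hYdef, Matrix.mul_add, Matrix.add_mul, Matrix.add_mul, Matrix.trace_add,
      Matrix.trace_add, Matrix.trace_add]
    rw [mul_smul_comm, smul_mul_assoc, mul_smul_comm, smul_mul_assoc, mul_smul_comm,
      smul_mul_assoc, mul_smul_comm, smul_mul_assoc]
    simp only [smul_smul, Matrix.trace_smul, smul_eq_mul, Complex.add_re]
    rw [show ((g0:ℂ) * (g0:ℂ)) = ((g0*g0 : ℝ) : ℂ) by push_cast; ring,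
      show ((g0:ℂ) * (g1:ℂ)) = ((g0*g1 : ℝ) : ℂ) by push_cast; ring,
      show ((g1:ℂ) * (g0:ℂ)) = ((g0*g1 : ℝ) : ℂ) by push_cast; ring,
      show ((g1:ℂ) * (g1:ℂ)) = ((g1*g1 : ℝ) : ℂ) by push_cast; ring]
    rw [hre_smul, hre_smul, hre_smul, hre_smul, hT0T0, hT1T1, ht10, ← htdef]
    ring
  have hCS := herm_CS hBh hYh
  rw [hBY, hBB, hYY, Real.sqrt_one, one_mul] at hCS
  have hs_le : g0 * g0 + g1 * g1 ≤ Real.sqrt ((g0 * g0 + g1 * g1) + 2 * (g0 * g1) * t) :=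
    le_trans (le_abs_self _) hCS
  have htf : t ≤ f := by
    rw [hf, Fid]
    have e0 : msqrt σ₀ = T0 := by rw [msqrt, dif_pos hσ₀psd]; rfl
    have e1 : msqrt σ₁ = T1 := by rw [msqrt, dif_pos hσ₁psd]; rfl
    rw [e0, e1]
    exact re_trace_le_traceNorm (T0 * T1)
  clear_value g0 g1 t
  have hsq : (g0 * g0 + g1 * g1) ^ 2 ≤ (g0 * g0 + g1 * g1) + 2 * (g0 * g1) * t := by
    have hg01 : 0 < g0 * g1 := mul_pos hg0pos hg1pos
    have hnn : 0 ≤ (g0 * g0 + g1 * g1) + 2 * (g0 * g1) * t :=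
      add_nonneg (add_nonneg (mul_self_nonneg g0) (mul_self_nonneg g1))
        (mul_nonneg (by linarith) htnn)
    have h2 := Real.sq_sqrt hnn
    nlinarith [hs_le, Real.sqrt_nonneg ((g0 * g0 + g1 * g1) + 2 * (g0 * g1) * t)]
  have hkey : 2 * (g0 * g1) ≤ 1 + t := by
    nlinarith [sq_nonneg (g0 - g1), sq_nonneg (g0 + g1), mul_pos hg0pos hg1pos,
      mul_nonneg (mul_nonneg hg0pos.le hg1pos.le) htnn]
  have hfinal : Real.exp H ≤ 1 + f := by
    calc Real.exp H ≤ 2 * (g0 * g1) := hexpH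
      _ ≤ 1 + t := hkey
      _ ≤ 1 + f := by linarith
  constructor
  · linarith
  · have h1f : (0:ℝ) < 1 + f := lt_of_lt_of_le (Real.exp_pos H) hfinal
    calc H = Real.log (Real.exp H) := (Real.log_exp H).symm
      _ ≤ Real.log (1 + f) := Real.log_le_log (Real.exp_pos H) hfinal
end

section
/- The function x ↦ (1/2)·arccos(x²) − (1/2)·arccos(x) is monotonically increasing on [0, 1/√3] and monotonically decreasing on [1/√3, 1]. -/
open Real Set

private lemma hasDeriv_f {x : ℝ} (hx1 : -1 < x) (hx2 : x < 1) :
    HasDerivAt (fun x : ℝ => (1/2) * Real.arccos (x^2) - (1/2) * Real.arccos x)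
      (1 / (2 * Real.sqrt (1 - x^2)) - x / Real.sqrt (1 - (x^2)^2)) x := by
  have hsq : x^2 < 1 := by nlinarith
  have h1 : HasDerivAt (fun x : ℝ => Real.arccos (x^2))
      (-(1 / Real.sqrt (1 - (x^2)^2)) * (2*x)) x := by
    have h := (Real.hasDerivAt_arccos (by nlinarith [sq_nonneg x]) (by nlinarith)).comp x
      (hasDerivAt_pow 2 x)
    simpa [mul_comm, Function.comp_def] using h
  have h2 := Real.hasDerivAt_arccos (by linarith) (by linarith)
  have h := ((h1.const_mul (1/2 : ℝ)).sub (h2.const_mul (1/2 : ℝ)))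
  have hs : (1 - x^2) ≠ 0 := by nlinarith
  have hs4 : (1 - (x^2)^2) ≠ 0 := by nlinarith [sq_nonneg x]
  refine h.congr_deriv ?_
  have h1pos : (0:ℝ) < Real.sqrt (1 - x^2) := Real.sqrt_pos.mpr (by nlinarith)
  have h4pos : (0:ℝ) < Real.sqrt (1 - (x^2)^2) := Real.sqrt_pos.mpr (by nlinarith [sq_nonneg x])
  field_simp
  ring

private lemma sqrt3_lt : (1 : ℝ) / Real.sqrt 3 < 1 := by
  rw [div_lt_one (by positivity)]
  nlinarith [Real.sq_sqrt (by norm_num : (3:ℝ) ≥ 0), Real.sqrt_nonneg 3]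

private lemma inv_sqrt3_sq : ((1:ℝ) / Real.sqrt 3)^2 = 1/3 := by
  rw [div_pow, one_pow, Real.sq_sqrt (by norm_num : (0:ℝ) ≤ 3)]

private lemma deriv_factor {x : ℝ} (hx0 : 0 < x) (hx1 : x < 1) :
    1 / (2 * Real.sqrt (1 - x^2)) - x / Real.sqrt (1 - (x^2)^2)
      = (Real.sqrt (1 + x^2) - 2*x) / (2 * Real.sqrt (1 - x^2) * Real.sqrt (1 + x^2)) := by
  have ha : (0:ℝ) < Real.sqrt (1 - x^2) := Real.sqrt_pos.mpr (by nlinarith)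
  have hb : (0:ℝ) < Real.sqrt (1 + x^2) := Real.sqrt_pos.mpr (by nlinarith)
  have hmul : Real.sqrt (1 - (x^2)^2) = Real.sqrt (1 - x^2) * Real.sqrt (1 + x^2) := by
    rw [← Real.sqrt_mul (by nlinarith)]; ring_nf
  rw [hmul]
  field_simp

/-- The function `x ↦ ½ arccos(x²) − ½ arccos(x)` is monotonically increasing on
`[0, 1/√3]` and monotonically decreasing on `[1/√3, 1]`. -/
theorem arccos_diff_monotone :
    MonotoneOn (fun x : ℝ => (1/2) * Real.arccos (x^2) - (1/2) * Real.arccos x)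
      (Set.Icc (0:ℝ) (1 / Real.sqrt 3)) ∧
    AntitoneOn (fun x : ℝ => (1/2) * Real.arccos (x^2) - (1/2) * Real.arccos x)
      (Set.Icc (1 / Real.sqrt 3) (1:ℝ)) := by
  have hcont : Continuous (fun x : ℝ => (1/2) * Real.arccos (x^2) - (1/2) * Real.arccos x) :=
    (continuous_const.mul (Real.continuous_arccos.comp (continuous_pow 2))).sub
      (continuous_const.mul Real.continuous_arccos)
  constructor
  · apply StrictMonoOn.monotoneOn
    apply strictMonoOn_of_deriv_pos (convex_Icc _ _) hcont.continuousOn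
    intro x hx
    rw [interior_Icc] at hx
    obtain ⟨hx0, hxu⟩ := hx
    have hx1 : x < 1 := hxu.trans sqrt3_lt
    rw [(hasDeriv_f (by linarith) hx1).deriv, deriv_factor hx0 hx1]
    have ha : (0:ℝ) < Real.sqrt (1 - x^2) := Real.sqrt_pos.mpr (by nlinarith)
    have hb : (0:ℝ) < Real.sqrt (1 + x^2) := Real.sqrt_pos.mpr (by nlinarith)
    have hbsq : Real.sqrt (1 + x^2) ^ 2 = 1 + x^2 := Real.sq_sqrt (by nlinarith)
    have hxsq : x^2 < 1/3 := by
      have h := mul_pos (sub_pos.mpr hxu) (show (0:ℝ) < x + 1 / Real.sqrt 3 by positivity)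
      nlinarith [inv_sqrt3_sq]
    have hkey : 2*x < Real.sqrt (1 + x^2) := by nlinarith
    exact div_pos (by linarith) (by positivity)
  · apply StrictAntiOn.antitoneOn
    apply strictAntiOn_of_deriv_neg (convex_Icc _ _) hcont.continuousOn
    intro x hx
    rw [interior_Icc] at hx
    obtain ⟨hxl, hx1⟩ := hx
    have hx0 : 0 < x := lt_trans (by positivity) hxl
    rw [(hasDeriv_f (by linarith) hx1).deriv, deriv_factor hx0 hx1]
    have ha : (0:ℝ) < Real.sqrt (1 - x^2) := Real.sqrt_pos.mpr (by nlinarith)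
    have hb : (0:ℝ) < Real.sqrt (1 + x^2) := Real.sqrt_pos.mpr (by nlinarith)
    have hbsq : Real.sqrt (1 + x^2) ^ 2 = 1 + x^2 := Real.sq_sqrt (by nlinarith)
    have hxsq : 1/3 < x^2 := by
      have h := mul_pos (sub_pos.mpr hxl) (show (0:ℝ) < x + 1 / Real.sqrt 3 by positivity)
      nlinarith [inv_sqrt3_sq]
    have hkey : Real.sqrt (1 + x^2) < 2*x := by nlinarith
    exact div_neg_of_neg_of_pos (by linarith) (by positivity)
end

section
/- The function x ↦ (arccos(x²) − arccos(x)) / √(1−x) is monotonically increasing on [0,1). -/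
open Real intervalIntegral

private lemma P_ge_one {x v : ℝ} (hx0 : 0 ≤ x) (hv0 : 0 ≤ v) (hv1 : v ≤ 1) :
    1 ≤ (1 + x * v) * (1 + x * (1 - v) + x ^ 2 * v) := by
  nlinarith [mul_nonneg hx0 hv0, mul_nonneg hx0 (sub_nonneg.2 hv1),
    mul_nonneg (mul_nonneg hx0 hx0) hv0]

private lemma intble {x : ℝ} (hx0 : 0 ≤ x) :
    IntervalIntegrable
      (fun v => x / Real.sqrt ((1 + x * v) * (1 + x * (1 - v) + x ^ 2 * v)))
      MeasureTheory.volume 0 1 := by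
  apply ContinuousOn.intervalIntegrable
  apply ContinuousOn.div continuousOn_const
  · exact (Real.continuous_sqrt.comp (by continuity)).continuousOn
  · intro v hv
    rw [Set.uIcc_of_le (zero_le_one)] at hv
    have := P_ge_one hx0 hv.1 hv.2
    positivity

private lemma key (x : ℝ) (hx0 : 0 ≤ x) (hx1 : x < 1) :
    (Real.arccos (x ^ 2) - Real.arccos x) / Real.sqrt (1 - x)
      = ∫ v in (0:ℝ)..1, x / Real.sqrt ((1 + x * v) * (1 + x * (1 - v) + x ^ 2 * v)) := by
  rcases eq_or_lt_of_le hx0 with h0 | hxpos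
  · simp [← h0]
  have hx2x : x ^ 2 ≤ x := by nlinarith
  have h1x : (0:ℝ) < 1 - x := by linarith
  have hsq : (0:ℝ) < Real.sqrt (1 - x) := Real.sqrt_pos.2 h1x
  -- arcsin integral
  have hFTC : (∫ t in (x ^ 2)..x, 1 / Real.sqrt (1 - t ^ 2))
      = Real.arcsin x - Real.arcsin (x ^ 2) := by
    apply intervalIntegral.integral_eq_sub_of_hasDerivAt
    · intro t ht
      rw [Set.uIcc_of_le hx2x] at ht
      have ht0 : 0 ≤ t := le_trans (sq_nonneg x) ht.1
      have ht1 : t < 1 := lt_of_le_of_lt ht.2 hx1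
      exact Real.hasDerivAt_arcsin (by linarith) (by linarith)
    · apply ContinuousOn.intervalIntegrable
      apply ContinuousOn.div continuousOn_const
      · exact (Real.continuous_sqrt.comp (by continuity)).continuousOn
      · intro t ht
        rw [Set.uIcc_of_le hx2x] at ht
        have ht0 : 0 ≤ t := le_trans (sq_nonneg x) ht.1
        have ht1 : t < 1 := lt_of_le_of_lt ht.2 hx1
        have : 0 < 1 - t ^ 2 := by nlinarith
        positivity
  -- substitution t = c * v + x with c = -(x*(1-x))
  have hcne : -(x * (1 - x)) ≠ 0 := by
    have : 0 < x * (1 - x) := by positivity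
    linarith
  have hsubst : (∫ v in (0:ℝ)..1, (1:ℝ) / Real.sqrt (1 - (-(x * (1 - x)) * v + x) ^ 2))
      = (-(x * (1 - x)))⁻¹ •
          ∫ t in (-(x * (1 - x)) * 0 + x)..(-(x * (1 - x)) * 1 + x), 1 / Real.sqrt (1 - t ^ 2) :=
    intervalIntegral.integral_comp_mul_add (fun t => 1 / Real.sqrt (1 - t ^ 2)) hcne x
  have he1 : -(x * (1 - x)) * 0 + x = x := by ring
  have he2 : -(x * (1 - x)) * 1 + x = x ^ 2 := by ring
  rw [he1, he2, intervalIntegral.integral_symm (x ^ 2) x, hFTC] at hsubst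
  -- rewrite the integrand pointwise
  have hcongr : (∫ v in (0:ℝ)..1, (1:ℝ) / Real.sqrt (1 - (-(x * (1 - x)) * v + x) ^ 2))
      = ∫ v in (0:ℝ)..1,
          (1 / Real.sqrt (1 - x)) *
            (1 / Real.sqrt ((1 + x * v) * (1 + x * (1 - v) + x ^ 2 * v))) := by
    apply intervalIntegral.integral_congr
    intro v hv
    simp only
    have hfact : 1 - (-(x * (1 - x)) * v + x) ^ 2
        = (1 - x) * ((1 + x * v) * (1 + x * (1 - v) + x ^ 2 * v)) := by ring
    rw [hfact, Real.sqrt_mul h1x.le, one_div, mul_inv, ← one_div, ← one_div]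
  rw [hcongr, intervalIntegral.integral_const_mul, smul_eq_mul] at hsubst
  set I : ℝ := ∫ v in (0:ℝ)..1,
      1 / Real.sqrt ((1 + x * v) * (1 + x * (1 - v) + x ^ 2 * v)) with hI
  -- solve for arcsin x - arcsin (x^2)
  have hD : Real.arcsin x - Real.arcsin (x ^ 2) = x * (1 - x) * (1 / Real.sqrt (1 - x) * I) := by
    have h2 : -(x * (1 - x)) * (1 / Real.sqrt (1 - x) * I)
        = -(Real.arcsin x - Real.arcsin (x ^ 2)) := by
      rw [hsubst, ← mul_assoc, mul_inv_cancel₀ hcne, one_mul]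
    linear_combination h2
  have harccos : Real.arccos (x ^ 2) - Real.arccos x
      = Real.arcsin x - Real.arcsin (x ^ 2) := by
    rw [Real.arccos_eq_pi_div_two_sub_arcsin, Real.arccos_eq_pi_div_two_sub_arcsin]; ring
  have hRHS : (∫ v in (0:ℝ)..1, x / Real.sqrt ((1 + x * v) * (1 + x * (1 - v) + x ^ 2 * v)))
      = x * I := by
    rw [hI, ← intervalIntegral.integral_const_mul]
    apply intervalIntegral.integral_congr
    intro v hv
    simp only
    ring
  rw [harccos, hD, hRHS, div_eq_iff hsq.ne']
  have hmul2 : Real.sqrt (1 - x) ^ 2 = 1 - x := Real.sq_sqrt h1x.le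
  field_simp
  linear_combination (-I) * hmul2

/-- The function `x ↦ (arccos(x²) − arccos(x)) / √(1−x)` is monotonically increasing
on `[0,1)`. -/
theorem arccos_diff_div_sqrt_monotone :
    MonotoneOn (fun x : ℝ => (Real.arccos (x^2) - Real.arccos x) / Real.sqrt (1 - x))
      (Set.Ico (0:ℝ) 1) := by
  intro x hx y hy hxy
  simp only
  rw [key x hx.1 hx.2, key y hy.1 hy.2]
  apply intervalIntegral.integral_mono_on zero_le_one (intble hx.1) (intble hy.1)
  intro v hv
  have hA := P_ge_one hx.1 hv.1 hv.2
  have hB := P_ge_one hy.1 hv.1 hv.2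
  set A := (1 + x * v) * (1 + x * (1 - v) + x ^ 2 * v) with hAdef
  set B := (1 + y * v) * (1 + y * (1 - v) + y ^ 2 * v) with hBdef
  have hsA : (0:ℝ) < Real.sqrt A := Real.sqrt_pos.2 (by linarith)
  have hsB : (0:ℝ) < Real.sqrt B := Real.sqrt_pos.2 (by linarith)
  rw [div_le_div_iff₀ hsA hsB]
  have hkey : x ^ 2 * B ≤ y ^ 2 * A := by
    have hid : y ^ 2 * A - x ^ 2 * B
        = (y - x) * (y * (1 + x * (1 - v) + x ^ 2 * v)
            + x * (1 + y * v) * (1 - x * y * v)) := by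
      rw [hAdef, hBdef]; ring
    have h1 : 0 ≤ y - x := sub_nonneg.2 hxy
    have h2 : 0 ≤ 1 + x * (1 - v) + x ^ 2 * v := by
      have := mul_nonneg hx.1 (sub_nonneg.2 hv.2)
      have := mul_nonneg (mul_nonneg hx.1 hx.1) hv.1
      nlinarith
    have hxy1 : x * y ≤ 1 := by nlinarith [mul_nonneg (sub_nonneg.2 hx.2.le) hy.1, hy.2, hx.1]
    have h3 : 0 ≤ 1 - x * y * v := by
      nlinarith [mul_nonneg (mul_nonneg hx.1 hy.1) hv.1,
        mul_nonneg (mul_nonneg hx.1 hy.1) (sub_nonneg.2 hv.2)]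
    have h4 : 0 ≤ 1 + y * v := by nlinarith [mul_nonneg hy.1 hv.1]
    nlinarith [mul_nonneg h1 (add_nonneg (mul_nonneg hy.1 h2)
      (mul_nonneg (mul_nonneg hx.1 h4) h3))]
  calc x * Real.sqrt B = Real.sqrt (x ^ 2 * B) := by
        rw [Real.sqrt_mul (sq_nonneg x), Real.sqrt_sq hx.1]
    _ ≤ Real.sqrt (y ^ 2 * A) := Real.sqrt_le_sqrt hkey
    _ = y * Real.sqrt A := by rw [Real.sqrt_mul (sq_nonneg y), Real.sqrt_sq hy.1]
end

section
/- For all H ∈ (0, log 2], h₂⁻¹(H) ≥ (1 − e⁻¹) · H / (1 − log H), where h₂⁻¹ : [0, log 2] → [0, 1/2] is the inverse of the binary entropy function (natural logarithm). -/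
/-- For all `H ∈ (0, log 2]`, `h₂⁻¹(H) ≥ (1 − e⁻¹) · H / (1 − log H)`. -/
theorem h2inv_lower_bound (h2inv : ℝ → ℝ)
    (hinv : ∀ x ∈ Set.Icc (0:ℝ) (Real.log 2),
      h2inv x ∈ Set.Icc (0:ℝ) (1/2) ∧ h2 (h2inv x) = x)
    (H : ℝ) (hH : H ∈ Set.Ioc (0:ℝ) (Real.log 2)) :
    h2inv H ≥ (1 - Real.exp (-1)) * H / (1 - Real.log H) := by
  obtain ⟨hH0, hHle⟩ := hH
  obtain ⟨⟨hp0le, hp12⟩, hpe⟩ := hinv H ⟨hH0.le, hHle⟩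
  set p : ℝ := h2inv H with hp
  have hlog2 : Real.log 2 < 1 := by
    have := Real.log_two_lt_d9; linarith
  have hH1 : H < 1 := lt_of_le_of_lt hHle hlog2
  have hlogH : Real.log H < 0 := Real.log_neg hH0 hH1
  set c : ℝ := 1 - Real.exp (-1) with hc
  set t : ℝ := 1 - Real.log H with ht
  have ht1 : 1 < t := by rw [ht]; linarith
  have ht0 : 0 < t := by linarith
  have hexp : (0:ℝ) < Real.exp (-1) := Real.exp_pos _
  have hexplt : Real.exp (-1) < 1 := by
    have : Real.exp (-1) < Real.exp 0 := Real.exp_lt_exp.mpr (by norm_num)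
    rwa [Real.exp_zero] at this
  have hc0 : 0 < c := by rw [hc]; linarith
  have hc1 : c < 1 := by rw [hc]; linarith
  -- p > 0
  have hp0 : 0 < p := by
    rcases lt_or_eq_of_le hp0le with h | h
    · exact h
    · exfalso
      rw [← h] at hpe
      simp [h2] at hpe
      linarith
  have h1p : 0 < 1 - p := by linarith
  -- H ≤ p (1 - log p)
  have key : -((1-p) * Real.log (1-p)) ≤ p := by
    have h := Real.log_le_sub_one_of_pos (x := (1-p)⁻¹) (by positivity)
    rw [Real.log_inv] at h
    have h2 : (1-p) * (-Real.log (1-p)) ≤ (1-p) * ((1-p)⁻¹ - 1) :=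
      mul_le_mul_of_nonneg_left h h1p.le
    rw [mul_sub, mul_inv_cancel₀ h1p.ne'] at h2
    nlinarith
  have hHfp : H ≤ p * (1 - Real.log p) := by
    rw [← hpe]; unfold h2; nlinarith [key]
  -- key analytic inequality : c (log t - log c) ≤ t e⁻¹
  have hce : (0:ℝ) < c * Real.exp 1 := by positivity
  have hkey : c * (Real.log t - Real.log c) ≤ t * Real.exp (-1) := by
    have h := Real.log_le_sub_one_of_pos (x := t / (c * Real.exp 1)) (by positivity)
    rw [Real.log_div ht0.ne' hce.ne', Real.log_mul hc0.ne' (Real.exp_pos 1).ne',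
      Real.log_exp] at h
    have h2 : Real.log t - Real.log c ≤ t / (c * Real.exp 1) := by linarith
    have h3 : c * (Real.log t - Real.log c) ≤ c * (t / (c * Real.exp 1)) :=
      mul_le_mul_of_nonneg_left h2 hc0.le
    have h4 : c * (t / (c * Real.exp 1)) = t * Real.exp (-1) := by
      rw [Real.exp_neg]; field_simp
    rw [h4] at h3; exact h3
  -- q := c H / t satisfies f q ≤ H
  have hq0 : 0 < c * H / t := by positivity
  have hq1 : c * H / t < 1 := by
    rw [div_lt_one ht0]
    nlinarith
  have hlogq : Real.log (c * H / t) = Real.log c + Real.log H - Real.log t := by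
    rw [Real.log_div (by positivity) ht0.ne', Real.log_mul hc0.ne' hH0.ne']
  have hfq : (c * H / t) * (1 - Real.log (c * H / t)) ≤ H := by
    rw [hlogq]
    have hlH : Real.log H = 1 - t := by rw [ht]; ring
    have expand : (c * H / t) * (1 - (Real.log c + Real.log H - Real.log t))
        = (H / t) * (c * (t + Real.log t - Real.log c)) := by
      rw [hlH]; field_simp; ring
    rw [expand]
    have hsum : c + Real.exp (-1) = 1 := by rw [hc]; ring
    have hb : c * (t + Real.log t - Real.log c) ≤ t := by nlinarith [hkey]
    calc (H / t) * (c * (t + Real.log t - Real.log c)) ≤ (H / t) * t :=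
          mul_le_mul_of_nonneg_left hb (by positivity)
      _ = H := by field_simp
  -- f is strictly monotone on (0,1]
  have hmono : StrictMonoOn (fun x => x * (1 - Real.log x)) (Set.Ioc 0 1) := by
    apply strictMonoOn_of_deriv_pos (convex_Ioc 0 1)
    · apply ContinuousOn.mul continuousOn_id
      apply ContinuousOn.sub continuousOn_const
      exact Real.continuousOn_log.mono (fun x hx => by simp; exact hx.1.ne')
    · intro x hx
      rw [interior_Ioc] at hx
      have hx0 : (0:ℝ) < x := hx.1
      have hd : HasDerivAt (fun x => x * (1 - Real.log x))
          (1 * (1 - Real.log x) + x * (0 - x⁻¹)) x :=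
        (hasDerivAt_id x).mul ((hasDerivAt_const x 1).sub (Real.hasDerivAt_log hx0.ne'))
      rw [hd.deriv]
      have hlx : Real.log x < 0 := Real.log_neg hx0 hx.2
      have hxx : x * x⁻¹ = 1 := by field_simp
      nlinarith
  -- conclude
  have hple : c * H / t ≤ p := by
    by_contra hlt
    push_neg at hlt
    have h1 := hmono (Set.mem_Ioc.mpr ⟨hp0, by linarith⟩)
      (Set.mem_Ioc.mpr ⟨hq0, hq1.le⟩) hlt
    simp only at h1
    linarith [hfq, hHfp]
  exact hple
end
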